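/- arXiv:2601.14078 — 2 statements merged into one kernel-verified Lean document; each statement's English description precedes it below -/
import Mathlib

section
/- Let A be an I-diamond DFA, and let w₁ ∈ C₁*, w₂ ∈ C₂* with C₁ × C₂ ⊆ I. Then for every state s for which Δ(s, w₁w₂) is defined, Δ(s, w₁w₂) = Δ(s, w₂w₁), and moreover Δ(s, w₁w₂) = Δ(s, w) for any word w that is an interleaving (shuffle) of w₁ and w₂. -/
/-- A deterministic finite automaton with a partial transition function. -/
structure PDFA (A S : Type) where
  step : S → A → Option S
  s0 : S
  F : Set S

/-- Extension of the partial transition function to words. -/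
def PDFA.stepw {A S : Type} (M : PDFA A S) : S → List A → Option S
  | s, [] => some s
  | s, a :: u => (M.step s a).bind fun t => M.stepw t u

/-- The I-diamond property: independent letters commute (as partial values). -/
def IDiamond {A S : Type} (M : PDFA A S) (I : A → A → Prop) : Prop :=
  ∀ a b, I a b → ∀ s, M.stepw s [a, b] = M.stepw s [b, a]

/-- Acceptance of a word by a PDFA. -/
def PDFA.Accepts {A S : Type} (M : PDFA A S) (w : List A) : Prop :=
  ∃ s ∈ M.F, M.stepw M.s0 w = some s

/-- `Interleave u v w` : `w` is an interleaving (shuffle) of `u` and `v`. -/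
inductive Interleave {A : Type} : List A → List A → List A → Prop
  | nil : Interleave [] [] []
  | left {a u v w} : Interleave u v w → Interleave (a :: u) v (a :: w)
  | right {a u v w} : Interleave u v w → Interleave u (a :: v) (a :: w)

lemma stepw_append {A S : Type} (M : PDFA A S) (u v : List A) :
    ∀ s, M.stepw s (u ++ v) = (M.stepw s u).bind fun t => M.stepw t v := by
  induction u with
  | nil => intro s; simp [PDFA.stepw]
  | cons a u ih =>
    intro s
    simp only [List.cons_append, PDFA.stepw, Option.bind_assoc]
    cases M.step s a with
    | none => rfl
    | some t => simp [ih t]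

/-- Move a letter independent of everything in `v` from front to back. -/
lemma swap_letter {A S : Type} {I : A → A → Prop} {M : PDFA A S}
    (hd : IDiamond M I) (a : A) (v : List A) (h : ∀ b ∈ v, I a b) :
    ∀ s, M.stepw s (a :: v) = M.stepw s (v ++ [a]) := by
  induction v with
  | nil => intro s; rfl
  | cons b v ih =>
    intro s
    have hab : I a b := h b List.mem_cons_self
    have h2 : M.stepw s (a :: b :: v) = M.stepw s (b :: a :: v) := by
      have hds := hd a b hab s
      have e1 := stepw_append M [a, b] v s
      have e2 := stepw_append M [b, a] v s
      simp only [List.cons_append, List.nil_append] at e1 e2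
      rw [e1, e2, hds]
    rw [h2]
    simp only [PDFA.stepw, List.cons_append]
    cases M.step s b with
    | none => rfl
    | some t => exact ih (fun b hb => h b (List.mem_cons_of_mem _ hb)) t

lemma comm_words {A S : Type} {I : A → A → Prop} {M : PDFA A S}
    (hd : IDiamond M I) (u v : List A) (h : ∀ b ∈ v, ∀ a ∈ u, I b a) :
    ∀ s, M.stepw s (u ++ v) = M.stepw s (v ++ u) := by
  induction v with
  | nil => intro s; simp
  | cons b v ih =>
    intro s
    have hb : ∀ a ∈ u, I b a := h b List.mem_cons_self
    have hsw := swap_letter hd b u hb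
    calc M.stepw s (u ++ b :: v)
        = M.stepw s ((u ++ [b]) ++ v) := by simp
      _ = (M.stepw s (u ++ [b])).bind fun t => M.stepw t v := stepw_append M _ _ s
      _ = (M.stepw s (b :: u)).bind fun t => M.stepw t v := by rw [hsw s]
      _ = M.stepw s ((b :: u) ++ v) := (stepw_append M _ _ s).symm
      _ = (M.step s b).bind fun t => M.stepw t (u ++ v) := rfl
      _ = (M.step s b).bind fun t => M.stepw t (v ++ u) := by
            cases M.step s b with
            | none => rfl
            | some t => simp [ih (fun c hc a ha => h c (List.mem_cons_of_mem _ hc) a ha) t]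
      _ = M.stepw s (b :: v ++ u) := rfl

lemma inter_stepw {A S : Type} {I : A → A → Prop} {M : PDFA A S}
    (hd : IDiamond M I) :
    ∀ {u v w : List A}, Interleave u v w → (∀ b ∈ v, ∀ a ∈ u, I b a) →
      ∀ s, M.stepw s w = M.stepw s (u ++ v) := by
  intro u v w hw
  induction hw with
  | nil => intro _ s; rfl
  | @left a u v w hw ih =>
    intro h s
    have ih' := ih (fun b hb c hc => h b hb c (List.mem_cons_of_mem _ hc))
    simp only [List.cons_append, PDFA.stepw]
    cases M.step s a with
    | none => rfl
    | some t => simp [ih' t]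
  | @right b u v w hw ih =>
    intro h s
    have ih' := ih (fun c hc a ha => h c (List.mem_cons_of_mem _ hc) a ha)
    have hb : ∀ a ∈ u, I b a := h b List.mem_cons_self
    calc M.stepw s (b :: w)
        = (M.step s b).bind fun t => M.stepw t w := rfl
      _ = (M.step s b).bind fun t => M.stepw t (u ++ v) := by
            cases M.step s b with
            | none => rfl
            | some t => simp [ih' t]
      _ = M.stepw s ((b :: u) ++ v) := rfl
      _ = (M.stepw s (b :: u)).bind fun t => M.stepw t v := stepw_append M _ _ s
      _ = (M.stepw s (u ++ [b])).bind fun t => M.stepw t v := by rw [swap_letter hd b u hb s]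
      _ = M.stepw s ((u ++ [b]) ++ v) := (stepw_append M _ _ s).symm
      _ = M.stepw s (u ++ b :: v) := by simp

theorem stmt1 {A S : Type} (I : A → A → Prop) (hsym : Symmetric I)
    (hirr : ∀ a, ¬ I a a) (M : PDFA A S) (hd : IDiamond M I)
    (C₁ C₂ : Set A) (hind : ∀ a ∈ C₁, ∀ b ∈ C₂, I a b)
    (w₁ w₂ : List A) (h1 : ∀ a ∈ w₁, a ∈ C₁) (h2 : ∀ a ∈ w₂, a ∈ C₂) :
    ∀ s s', M.stepw s (w₁ ++ w₂) = some s' →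
      M.stepw s (w₂ ++ w₁) = some s' ∧
      ∀ w, Interleave w₁ w₂ w → M.stepw s w = some s' := by
  intro s s' hs
  have hI : ∀ b ∈ w₂, ∀ a ∈ w₁, I b a :=
    fun b hb a ha => hsym (hind a (h1 a ha) b (h2 b hb))
  refine ⟨?_, ?_⟩
  · rw [← comm_words hd w₁ w₂ hI s]; exact hs
  · intro w hw
    rw [inter_stepw hd hw hI s]; exact hs
end

section
/- Let A be an I(ℂ)-diamond DFA with n states over a tree-like communication architecture (ℂ, T). Then the asynchronous automaton B constructed in the paper — where each process's local state is a pair (s,t) ∈ S × S, with transition on letter a computing s_a = TDiam(T_a) from the states of processes in ℂ(a), moving all participants' second components to Δ(s_a, a) and updating first components except at the root of T_a — recognizes exactly L(A). In particular every process of B has at most n² states. -/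
/-- An asynchronous (Zielonka) automaton over distributed alphabet `(A, dom)`
with processes `P` and local state sets `St p`. -/
structure AAut (P A : Type) (dom : A → Set P) (St : P → Type) where
  init : ∀ p, St p
  trans : ∀ a : A, ((p : {x // x ∈ dom a}) → St p.1) →
    Option ((p : {x // x ∈ dom a}) → St p.1)
  Acc : Set (∀ p, St p)

open Classical in
/-- One global step of an asynchronous automaton: only processes in `dom a`
read and change their states. -/
noncomputable def AAut.stepG {P A : Type} {dom : A → Set P} {St : P → Type}
    (B : AAut P A dom St) (a : A) (g : ∀ p, St p) : Option (∀ p, St p) :=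
  (B.trans a (fun p => g p.1)).map fun upd p =>
    if h : p ∈ dom a then upd ⟨p, h⟩ else g p

noncomputable def AAut.runw {P A : Type} {dom : A → Set P} {St : P → Type}
    (B : AAut P A dom St) : (∀ p, St p) → List A → Option (∀ p, St p)
  | g, [] => some g
  | g, a :: u => (B.stepG a g).bind fun g' => B.runw g' u

def AAut.Accepts {P A : Type} {dom : A → Set P} {St : P → Type}
    (B : AAut P A dom St) (w : List A) : Prop :=
  ∃ g ∈ B.Acc, B.runw B.init w = some g

/-- The communication architecture `dom` is tree-like w.r.t. the tree `T`. -/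
def TreeLike {P A : Type} (dom : A → Set P) (T : SimpleGraph P) : Prop :=
  T.IsTree ∧ (∀ a, (SimpleGraph.induce (dom a) T).Connected) ∧
    (∀ p q, T.Adj p q → ∃ a, p ∈ dom a ∧ q ∈ dom a)

namespace Stmt11
open Classical
attribute [local instance] Classical.propDecidable

variable {P A S : Type} (dom : A → Set P)

/-- restriction of a word to a set of (absolute) positions, `k` = index of first letter -/
noncomputable def restr (U : Set ℕ) : List A → ℕ → List A
  | [], _ => []
  | a :: t, k => (if k ∈ U then [a] else []) ++ restr U t (k + 1)

theorem restr_append (U : Set ℕ) (u v : List A) (k : ℕ) :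
    restr U (u ++ v) k = restr U u k ++ restr U v (k + u.length) := by
  induction u generalizing k with
  | nil => simp [restr]
  | cons a t ih => simp [restr, ih (k+1)]; ring_nf

theorem restr_snoc (U : Set ℕ) (w : List A) (a : A) :
    restr U (w ++ [a]) 0 = restr U w 0 ++ if w.length ∈ U then [a] else [] := by
  rw [restr_append]; simp [restr]

theorem restr_congr {U V : Set ℕ} (w : List A) (k : ℕ)
    (h : ∀ i, k ≤ i → i < k + w.length → (i ∈ U ↔ i ∈ V)) :
    restr U w k = restr V w k := by
  induction w generalizing k with
  | nil => rfl
  | cons a t ih =>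
    simp only [restr]
    rw [if_congr (h k le_rfl (by simp)) rfl rfl, ih (k+1) (fun i h1 h2 => h i (by omega) (by simp at h2 ⊢; omega))]

theorem restr_full (w : List A) (k : ℕ) (U : Set ℕ) (h : ∀ i, k ≤ i → i < k + w.length → i ∈ U) :
    restr U w k = w := by
  induction w generalizing k with
  | nil => rfl
  | cons a t ih =>
    simp only [restr, if_pos (h k le_rfl (by simp))]
    simp [ih (k+1) (fun i h1 h2 => h i (by omega) (by simp at h2 ⊢; omega))]

theorem mem_restr {U : Set ℕ} {w : List A} {k : ℕ} {b : A} (h : b ∈ restr U w k) :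
    ∃ j, ∃ hj : j < w.length, (k + j) ∈ U ∧ b = w.get ⟨j, hj⟩ := by
  induction w generalizing k with
  | nil => simp [restr] at h
  | cons a t ih =>
    simp only [restr] at h
    rcases List.mem_append.1 h with h1 | h2
    · refine ⟨0, by simp, ?_, ?_⟩
      · by_cases hk : k ∈ U
        · simpa using hk
        · simp [hk] at h1
      · by_cases hk : k ∈ U
        · simp [hk] at h1; simp [h1]
        · simp [hk] at h1
    · obtain ⟨j, hj, hm, he⟩ := ih h2
      exact ⟨j + 1, by simpa using Nat.succ_lt_succ hj, by rw [show k + (j+1) = k+1+j by ring]; exact hm, by simpa using he⟩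

/-- the set of processes participating in the `i`-th letter of `w` -/
def Doms (w : List A) (i : ℕ) : Set P := {p | ∃ h : i < w.length, p ∈ dom (w.get ⟨i, h⟩)}

theorem doms_lt {w : List A} {i : ℕ} (h : (Doms dom w i).Nonempty) : i < w.length := by
  obtain ⟨p, hp, _⟩ := h; exact hp

theorem doms_append_lt {w : List A} {v : List A} {i : ℕ} (h : i < w.length) :
    Doms dom (w ++ v) i = Doms dom w i := by
  ext p
  constructor
  · rintro ⟨h2, hp⟩; exact ⟨h, by rwa [List.get_eq_getElem, List.getElem_append_left h] at hp⟩
  · rintro ⟨h2, hp⟩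
    refine ⟨by simp; omega, ?_⟩
    rwa [List.get_eq_getElem, List.getElem_append_left h]

theorem doms_snoc_last (w : List A) (a : A) : Doms dom (w ++ [a]) w.length = dom a := by
  ext p
  constructor
  · rintro ⟨h2, hp⟩
    have : (w ++ [a]).get ⟨w.length, h2⟩ = a := by
      rw [List.get_eq_getElem, List.getElem_append_right (le_refl _)]; simp
    rwa [this] at hp
  · intro hp
    refine ⟨by simp, ?_⟩
    have : (w ++ [a]).get ⟨w.length, by simp⟩ = a := by
      rw [List.get_eq_getElem, List.getElem_append_right (le_refl _)]; simp
    rwa [this]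

theorem doms_get {w : List A} {i : ℕ} (h : i < w.length) :
    Doms dom w i = dom (w.get ⟨i, h⟩) := by
  ext p; exact ⟨fun ⟨_, hp⟩ => hp, fun hp => ⟨h, hp⟩⟩

/-- `U` is a (dependence-)closed set of positions of `w` -/
def Closed (w : List A) (U : Set ℕ) : Prop :=
  (∀ i ∈ U, i < w.length) ∧
    ∀ i j, i < j → j ∈ U → (Doms dom w i ∩ Doms dom w j).Nonempty → i ∈ U

theorem closed_empty (w : List A) : Closed dom w ∅ := ⟨by simp, by simp⟩

theorem closed_inter {w : List A} {U V : Set ℕ} (hU : Closed dom w U) (hV : Closed dom w V) :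
    Closed dom w (U ∩ V) :=
  ⟨fun i hi => hU.1 i hi.1, fun i j hij hj hd' => ⟨hU.2 i j hij hj.1 hd', hV.2 i j hij hj.2 hd'⟩⟩

theorem closed_union {w : List A} {U V : Set ℕ} (hU : Closed dom w U) (hV : Closed dom w V) :
    Closed dom w (U ∪ V) := by
  refine ⟨fun i hi => hi.elim (hU.1 i) (hV.1 i), fun i j hij hj hd' => ?_⟩
  rcases hj with hj | hj
  · exact Or.inl (hU.2 i j hij hj hd')
  · exact Or.inr (hV.2 i j hij hj hd')

theorem closed_full (w : List A) : Closed dom w {i | i < w.length} :=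
  ⟨fun i hi => hi, fun i j hij hj _ => lt_trans hij hj⟩

theorem closed_of_snoc {w : List A} {a : A} {U : Set ℕ} (h : Closed dom (w ++ [a]) U)
    (hn : w.length ∉ U) : Closed dom w U := by
  constructor
  · intro i hi
    have := h.1 i hi
    simp at this
    rcases Nat.lt_or_ge i w.length with h1 | h1
    · exact h1
    · exfalso; have : i = w.length := by omega
      exact hn (this ▸ hi)
  · intro i j hij hj hd'
    have hjl : j < w.length := by
      rcases Nat.lt_or_ge j w.length with h1 | h1
      · exact h1
      · exfalso
        have := h.1 j hj; simp at this
        have : j = w.length := by omega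
        exact hn (this ▸ hj)
    have hil : i < w.length := lt_trans hij hjl
    refine h.2 i j hij hj ?_
    rwa [doms_append_lt dom hil, doms_append_lt dom hjl]

theorem closed_snoc_of {w : List A} {a : A} {U : Set ℕ} (h : Closed dom w U) :
    Closed dom (w ++ [a]) U := by
  refine ⟨fun i hi => by have := h.1 i hi; simp; omega, fun i j hij hj hd' => ?_⟩
  have hjl : j < w.length := h.1 j hj
  have hil : i < w.length := lt_trans hij hjl
  refine h.2 i j hij hj ?_
  rwa [doms_append_lt dom hil, doms_append_lt dom hjl] at hd'



/-- direct dependence between positions -/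
def dep1 (w : List A) (i j : ℕ) : Prop :=
  i < j ∧ (Doms dom w i ∩ Doms dom w j).Nonempty

/-- happens-before (causal) order on positions of `w` -/
def hb (w : List A) : ℕ → ℕ → Prop := Relation.ReflTransGen (dep1 dom w)

/-- the view of process `q` after `w`: positions causally below some `q`-event -/
def view (w : List A) (q : P) : Set ℕ := {i | ∃ k, hb dom w i k ∧ q ∈ Doms dom w k}

theorem hb_le {w : List A} {i j : ℕ} (h : hb dom w i j) : i ≤ j := by
  induction h with
  | refl => exact le_rfl
  | tail _ h2 ih => exact le_trans ih (le_of_lt h2.1)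

theorem view_lt {w : List A} {q : P} {i : ℕ} (h : i ∈ view dom w q) : i < w.length := by
  obtain ⟨k, hik, hq⟩ := h
  have hk : k < w.length := doms_lt dom ⟨q, hq⟩
  rcases Relation.ReflTransGen.cases_head hik with rfl | ⟨j, h1, _⟩
  · exact hk
  · exact doms_lt dom (Set.Nonempty.mono Set.inter_subset_left h1.2)

theorem closed_view (w : List A) (q : P) : Closed dom w (view dom w q) := by
  refine ⟨fun i hi => view_lt dom hi, fun i j hij hj hd' => ?_⟩
  obtain ⟨k, hjk, hq⟩ := hj
  exact ⟨k, Relation.ReflTransGen.head ⟨hij, hd'⟩ hjk, hq⟩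

theorem self_mem_view {w : List A} {q : P} {k : ℕ} (h : q ∈ Doms dom w k) :
    k ∈ view dom w q := ⟨k, Relation.ReflTransGen.refl, h⟩

theorem hb_mono_snoc {w : List A} {a : A} {i j : ℕ} (h : hb dom w i j) :
    hb dom (w ++ [a]) i j := by
  induction h with
  | refl => exact Relation.ReflTransGen.refl
  | tail h1 h2 ih =>
    refine Relation.ReflTransGen.tail ih ⟨h2.1, ?_⟩
    have hbl : _ < w.length := doms_lt dom (Set.Nonempty.mono Set.inter_subset_left h2.2)
    have hcl : _ < w.length := doms_lt dom (Set.Nonempty.mono Set.inter_subset_right h2.2)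
    rw [doms_append_lt dom hbl, doms_append_lt dom hcl]
    exact h2.2

theorem hb_snoc_lt {w : List A} {a : A} {i j : ℕ} (h : hb dom (w ++ [a]) i j)
    (hj : j < w.length) : hb dom w i j := by
  induction h using Relation.ReflTransGen.head_induction_on with
  | refl => exact Relation.ReflTransGen.refl
  | head h1 h2 ih =>
    rename_i x y
    have hyj : y ≤ j := hb_le dom h2
    have hy : y < w.length := lt_of_le_of_lt hyj hj
    have hx : x < w.length := lt_trans h1.1 hy
    refine Relation.ReflTransGen.head ⟨h1.1, ?_⟩ ih
    have h12 := h1.2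
    rwa [doms_append_lt dom hx, doms_append_lt dom hy] at h12

theorem hb_snoc_last {w : List A} {a : A} {i : ℕ} (h : hb dom (w ++ [a]) i w.length)
    (hi : i ≠ w.length) : ∃ j, j < w.length ∧ hb dom w i j ∧ (Doms dom w j ∩ dom a).Nonempty := by
  rcases Relation.ReflTransGen.cases_tail h with he | ⟨j, h1, h2⟩
  · exact absurd he.symm hi
  · have hjl : j < w.length := h2.1
    refine ⟨j, hjl, hb_snoc_lt dom h1 hjl, ?_⟩
    have := h2.2
    rwa [doms_append_lt dom hjl, doms_snoc_last dom] at this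

theorem view_snoc_mem {w : List A} {a : A} {q : P} (hq : q ∈ dom a) :
    view dom (w ++ [a]) q = {i | ∃ q' ∈ dom a, i ∈ view dom w q'} ∪ {w.length} := by
  ext i
  constructor
  · rintro ⟨k, hik, hk⟩
    have hkl : k < w.length + 1 := by simpa using doms_lt dom ⟨q, hk⟩
    rcases Nat.lt_or_ge k w.length with hlt | hge
    · left
      rw [doms_append_lt dom hlt] at hk
      exact ⟨q, hq, k, hb_snoc_lt dom hik hlt, hk⟩
    · have hkn : k = w.length := by omega
      subst hkn
      by_cases hin : i = w.length
      · right; simp [hin]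
      · left
        obtain ⟨j, hjl, hij, ⟨q', hq'1, hq'2⟩⟩ := hb_snoc_last dom hik hin
        exact ⟨q', hq'2, j, hij, hq'1⟩
  · rintro (⟨q', hq', k, hik, hk⟩ | hi)
    · have hkl : k < w.length := doms_lt dom ⟨q', hk⟩
      refine ⟨w.length, ?_, by rwa [doms_snoc_last dom]⟩
      refine Relation.ReflTransGen.tail (hb_mono_snoc dom hik) ⟨hkl, ?_⟩
      rw [doms_append_lt dom hkl, doms_snoc_last dom]
      exact ⟨q', hk, hq'⟩
    · simp only [Set.mem_singleton_iff] at hi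
      subst hi
      exact self_mem_view dom (by rw [doms_snoc_last dom]; exact hq)

theorem view_snoc_not_mem {w : List A} {a : A} {q : P} (hq : q ∉ dom a) :
    view dom (w ++ [a]) q = view dom w q := by
  ext i
  constructor
  · rintro ⟨k, hik, hk⟩
    have hkl : k < w.length + 1 := by simpa using doms_lt dom ⟨q, hk⟩
    have hkn : k ≠ w.length := by
      rintro rfl; rw [doms_snoc_last dom] at hk; exact hq hk
    have hlt : k < w.length := by omega
    rw [doms_append_lt dom hlt] at hk
    exact ⟨k, hb_snoc_lt dom hik hlt, hk⟩
  · rintro ⟨k, hik, hk⟩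
    have hkl : k < w.length := doms_lt dom ⟨q, hk⟩
    exact ⟨k, hb_mono_snoc dom hik, by rwa [doms_append_lt dom hkl]⟩

/-- crossing lemma: a causal chain entering `C` passes an event meeting both `C` and `Cᶜ` -/
theorem hb_cross {w : List A} {C : Set P} {i k : ℕ} (h : hb dom w i k)
    (hi : Doms dom w i ∩ C = ∅) (hk : (Doms dom w k ∩ C).Nonempty) :
    ∃ m, hb dom w i m ∧ hb dom w m k ∧ (Doms dom w m ∩ C).Nonempty ∧
      (Doms dom w m ∩ Cᶜ).Nonempty := by
  induction h with
  | refl => rw [hi] at hk; exact absurd hk (by simp [Set.not_nonempty_empty])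
  | tail h1 h2 ih =>
    rename_i b c
    by_cases hbC : (Doms dom w b ∩ C).Nonempty
    · obtain ⟨m, hm1, hm2, hm3, hm4⟩ := ih hbC
      exact ⟨m, hm1, Relation.ReflTransGen.tail hm2 h2, hm3, hm4⟩
    · refine ⟨c, Relation.ReflTransGen.tail h1 h2, Relation.ReflTransGen.refl, hk, ?_⟩
      obtain ⟨x, hx1, hx2⟩ := h2.2
      refine ⟨x, hx2, fun hxC => hbC ⟨x, hx1, hxC⟩⟩

section Tree
variable (T : SimpleGraph P) (ht : T.IsTree)
include ht

noncomputable def root : P := Classical.choice ht.isConnected.nonempty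

noncomputable def pth (v : P) : T.Walk v (root T ht) :=
  (ht.existsUnique_path v (root T ht)).choose

theorem pth_isPath (v : P) : (pth T ht v).IsPath :=
  (ht.existsUnique_path v (root T ht)).choose_spec.1

theorem pth_unique {v : P} (p : T.Walk v (root T ht)) (hp : p.IsPath) : p = pth T ht v :=
  (ht.existsUnique_path v (root T ht)).choose_spec.2 p hp

theorem path_unique {u v : P} (p q : T.Walk u v) (hp : p.IsPath) (hq : q.IsPath) : p = q := by
  have h := ht.existsUnique_path u v
  rw [h.choose_spec.2 p hp, h.choose_spec.2 q hq]

noncomputable def parent (v : P) : P := (pth T ht v).getVert 1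

theorem pth_root : pth T ht (root T ht) = SimpleGraph.Walk.nil :=
  (pth_unique T ht SimpleGraph.Walk.nil SimpleGraph.Walk.IsPath.nil).symm

theorem pth_cons_decomp {v : P} (h : v ≠ root T ht) :
    ∃ hadj : T.Adj v (parent T ht v), pth T ht v = SimpleGraph.Walk.cons hadj (pth T ht (parent T ht v)) := by
  obtain ⟨x, hadj, p', he⟩ := SimpleGraph.Walk.exists_eq_cons_of_ne h (pth T ht v)
  have hx : parent T ht v = x := by
    unfold parent; rw [he]; simp [SimpleGraph.Walk.getVert_cons_succ]
  have hp' : p'.IsPath := by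
    have := pth_isPath T ht v
    rw [he] at this
    exact (SimpleGraph.Walk.cons_isPath_iff _ _).1 this |>.1
  subst hx
  exact ⟨hadj, by rw [he, pth_unique T ht p' hp']⟩

theorem adj_parent {v : P} (h : v ≠ root T ht) : T.Adj v (parent T ht v) :=
  (pth_cons_decomp T ht h).choose

theorem support_pth_eq {v : P} (h : v ≠ root T ht) :
    (pth T ht v).support = v :: (pth T ht (parent T ht v)).support := by
  obtain ⟨hadj, he⟩ := pth_cons_decomp T ht h
  rw [he, SimpleGraph.Walk.support_cons]

theorem length_pth_eq {v : P} (h : v ≠ root T ht) :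
    (pth T ht v).length = (pth T ht (parent T ht v)).length + 1 := by
  obtain ⟨hadj, he⟩ := pth_cons_decomp T ht h
  rw [he, SimpleGraph.Walk.length_cons]

theorem not_mem_support_parent {v : P} (h : v ≠ root T ht) :
    v ∉ (pth T ht (parent T ht v)).support := by
  obtain ⟨hadj, he⟩ := pth_cons_decomp T ht h
  have := pth_isPath T ht v
  rw [he] at this
  exact ((SimpleGraph.Walk.cons_isPath_iff _ _).1 this).2

/-- the subtree below `c` (vertices whose path to the root passes `c`) -/
def Sub (c : P) : Set P := {x | c ∈ (pth T ht x).support}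

theorem mem_Sub_self (x : P) : x ∈ Sub T ht x := SimpleGraph.Walk.start_mem_support _

theorem root_mem_support (v : P) : root T ht ∈ (pth T ht v).support :=
  SimpleGraph.Walk.end_mem_support _

theorem mem_Sub_root (x : P) : x ∈ Sub T ht (root T ht) := root_mem_support T ht x

theorem parent_not_mem_Sub {c : P} (h : c ≠ root T ht) : parent T ht c ∉ Sub T ht c :=
  fun hc => not_mem_support_parent T ht h hc

theorem length_lt_of_mem_support : ∀ n {x z : P}, (pth T ht x).length ≤ n →
    z ∈ (pth T ht x).support → z ≠ x → (pth T ht z).length < (pth T ht x).length := by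
  intro n
  induction n with
  | zero =>
    intro x z hn hz hne
    exfalso
    by_cases hx : x = root T ht
    · subst hx; rw [pth_root] at hz; simp at hz; exact hne hz
    · rw [length_pth_eq T ht hx] at hn; omega
  | succ n ih =>
    intro x z hn hz hne
    by_cases hx : x = root T ht
    · exfalso; subst hx; rw [pth_root] at hz; simp at hz; exact hne hz
    · rw [support_pth_eq T ht hx] at hz
      rcases List.mem_cons.1 hz with rfl | hz'
      · exact absurd rfl hne
      · rw [length_pth_eq T ht hx]
        by_cases hzp : z = parent T ht x
        · subst hzp; omega
        · have h1 := ih (x := parent T ht x) (by rw [length_pth_eq T ht hx] at hn; omega) hz' hzp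
          omega

theorem support_antisymm {x z : P} (h1 : z ∈ (pth T ht x).support)
    (h2 : x ∈ (pth T ht z).support) : x = z := by
  by_contra hne
  have l1 := length_lt_of_mem_support T ht (pth T ht x).length le_rfl h1 (fun h => hne h.symm)
  have l2 := length_lt_of_mem_support T ht (pth T ht z).length le_rfl h2 hne
  omega

theorem adj_parent_cases {u v : P} (h : T.Adj u v) :
    u = parent T ht v ∨ v = parent T ht u := by
  by_cases hv : v ∈ (pth T ht u).support
  · -- then u ∉ pth v's support
    have hu : u ∉ (pth T ht v).support := by
      intro hu
      exact h.ne (support_antisymm T ht hv hu)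
    right
    have hpath : (SimpleGraph.Walk.cons h (pth T ht v)).IsPath :=
      (SimpleGraph.Walk.cons_isPath_iff _ _).2 ⟨pth_isPath T ht v, hu⟩
    have he := pth_unique T ht _ hpath
    have : parent T ht u = (SimpleGraph.Walk.cons h (pth T ht v)).getVert 1 := by
      unfold parent; rw [he]
    rw [this]; simp [SimpleGraph.Walk.getVert_cons_succ]
  · left
    have hpath : (SimpleGraph.Walk.cons h.symm (pth T ht u)).IsPath :=
      (SimpleGraph.Walk.cons_isPath_iff _ _).2 ⟨pth_isPath T ht u, hv⟩
    have he := pth_unique T ht _ hpath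
    have : parent T ht v = (SimpleGraph.Walk.cons h.symm (pth T ht u)).getVert 1 := by
      unfold parent; rw [he]
    rw [this]; simp [SimpleGraph.Walk.getVert_cons_succ]

theorem boundary {u v c : P} (h : T.Adj u v) (hu : u ∈ Sub T ht c) (hv : v ∉ Sub T ht c) :
    u = c ∧ v = parent T ht c := by
  have huc : u = c := by
    have hbp : ((SimpleGraph.Walk.cons h (pth T ht v)).bypass).IsPath :=
      SimpleGraph.Walk.bypass_isPath _
    have he := pth_unique T ht _ hbp
    have hsub : (pth T ht u).support ⊆ u :: (pth T ht v).support := by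
      rw [← he]
      intro z hz
      have := SimpleGraph.Walk.support_bypass_subset _ hz
      rwa [SimpleGraph.Walk.support_cons] at this
    rcases List.mem_cons.1 (hsub hu) with h1 | h1
    · exact h1.symm
    · exact absurd h1 hv
  subst huc
  rcases adj_parent_cases T ht h with h1 | h1
  · exfalso
    apply hv
    by_cases hvr : v = root T ht
    · subst hvr
      have hpr : parent T ht (root T ht) = root T ht := by
        unfold parent; rw [pth_root]; simp [SimpleGraph.Walk.getVert]
      rw [hpr] at h1
      subst h1
      exact mem_Sub_root T ht _
    · show u ∈ (pth T ht v).support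
      rw [support_pth_eq T ht hvr, ← h1]
      exact List.mem_cons_of_mem _ (SimpleGraph.Walk.start_mem_support _)
  · exact ⟨rfl, h1⟩

theorem walk_in_set {D : Set P} (hD : (SimpleGraph.induce D T).Connected) {u v : P}
    (hu : u ∈ D) (hv : v ∈ D) : ∃ w : T.Walk u v, ∀ x ∈ w.support, x ∈ D := by
  obtain ⟨p⟩ := hD ⟨u, hu⟩ ⟨v, hv⟩
  refine ⟨p.map (SimpleGraph.Embedding.induce D).toHom, ?_⟩
  intro x hx
  replace hx : x ∈ p.support.map (SimpleGraph.Embedding.induce (G := T) D).toHom := by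
    rw [← SimpleGraph.Walk.support_map]; exact hx
  rw [List.mem_map] at hx
  obtain ⟨⟨y, hy⟩, _, rfl⟩ := hx
  exact hy

theorem cross_edge {c : P} : ∀ {x y : P} (w : T.Walk x y) (D : Set P),
    (∀ z ∈ w.support, z ∈ D) → x ∈ Sub T ht c → y ∉ Sub T ht c →
    ∃ u v, T.Adj u v ∧ u ∈ Sub T ht c ∧ v ∉ Sub T ht c ∧ u ∈ D ∧ v ∈ D := by
  intro x y w
  induction w with
  | nil => intro D _ hx hy; exact absurd hx hy
  | @cons u v' y' hadj p ih =>
    intro D hsup hx hy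
    by_cases hv : v' ∈ Sub T ht c
    · exact ih D (fun z hz => hsup z (by simp [SimpleGraph.Walk.support_cons, hz])) hv hy
    · exact ⟨u, v', hadj, hx, hv, hsup u (SimpleGraph.Walk.start_mem_support _),
        hsup v' (by simp [SimpleGraph.Walk.support_cons, SimpleGraph.Walk.start_mem_support])⟩

theorem bd {D : Set P} (hD : (SimpleGraph.induce D T).Connected) {c x y : P}
    (hx : x ∈ D) (hxs : x ∈ Sub T ht c) (hy : y ∈ D) (hys : y ∉ Sub T ht c) :
    c ∈ D ∧ parent T ht c ∈ D := by
  obtain ⟨w, hw⟩ := walk_in_set T ht hD hx hy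
  obtain ⟨u, v, hadj, hu, hv, huD, hvD⟩ := cross_edge T ht w D hw hxs hys
  obtain ⟨rfl, rfl⟩ := boundary T ht hadj hu hv
  exact ⟨huD, hvD⟩

theorem rho_step {D : Set P} {ρ : P} (hmin : ∀ z ∈ D, (pth T ht ρ).length ≤ (pth T ht z).length)
    {v z : P} (hadj : T.Adj v z) (hz : z ∈ D) (hv : ρ ∈ (pth T ht v).support) :
    ρ ∈ (pth T ht z).support := by
  rcases adj_parent_cases T ht hadj with h1 | h1
  · -- v = parent z
    have hzr : z ≠ root T ht := by
      intro hzr; subst hzr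
      have hpr : parent T ht (root T ht) = root T ht := by
        unfold parent; rw [pth_root]; simp [SimpleGraph.Walk.getVert]
      rw [hpr] at h1
      subst h1
      exact hadj.ne rfl
    rw [support_pth_eq T ht hzr, ← h1]
    exact List.mem_cons_of_mem _ hv
  · -- z = parent v
    by_cases hvr : v = root T ht
    · subst hvr
      rw [pth_root] at hv
      simp at hv
      subst hv
      -- z = parent ρ where ρ = root: parent root = root
      have hpr : parent T ht (root T ht) = root T ht := by
        unfold parent; rw [pth_root]; simp [SimpleGraph.Walk.getVert]
      rw [hpr] at h1
      subst h1
      exact root_mem_support T ht _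
    · rw [support_pth_eq T ht hvr, ← h1] at hv
      rcases List.mem_cons.1 hv with rfl | hv'
      · -- ρ = v, z = parent ρ: contradiction with minimality
        exfalso
        have hlen := length_pth_eq T ht hvr
        rw [← h1] at hlen
        have := hmin z hz
        omega
      · exact hv'

theorem rho_reach {D : Set P} (hD : (SimpleGraph.induce D T).Connected) {ρ : P} (hρ : ρ ∈ D)
    (hmin : ∀ z ∈ D, (pth T ht ρ).length ≤ (pth T ht z).length) :
    ∀ q ∈ D, ρ ∈ (pth T ht q).support := by
  intro q hq
  obtain ⟨w, hw⟩ := walk_in_set T ht hD hρ hq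
  have key : ∀ {x y : P} (w : T.Walk x y), (∀ z ∈ w.support, z ∈ D) →
      ρ ∈ (pth T ht x).support → ρ ∈ (pth T ht y).support := by
    intro x y w
    induction w with
    | nil => exact fun _ h => h
    | @cons u v' y' hadj p ih =>
      intro hsup hx
      refine ih (fun z hz => hsup z (by simp [SimpleGraph.Walk.support_cons, hz])) ?_
      exact rho_step T ht hmin hadj
        (hsup v' (by simp [SimpleGraph.Walk.support_cons, SimpleGraph.Walk.start_mem_support])) hx
  exact key w hw (SimpleGraph.Walk.start_mem_support _)

/-- ancestor chain from `q` up to (the first occurrence of) `ρ`, with fuel -/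
noncomputable def chainN (ρ : P) : ℕ → P → List P
  | 0, q => [q]
  | k + 1, q => if q = ρ then [q] else q :: chainN ρ k (parent T ht q)

noncomputable def chain (ρ q : P) : List P := chainN T ht ρ (pth T ht q).length q

theorem ne_root_of_proper {ρ q : P} (hρ : ρ ∈ (pth T ht q).support) (hne : q ≠ ρ) :
    q ≠ root T ht := by
  intro hqr; subst hqr
  rw [pth_root] at hρ
  simp at hρ
  exact hne hρ.symm

theorem chain_eq_self (ρ : P) : chain T ht ρ ρ = [ρ] := by
  unfold chain
  cases h : (pth T ht ρ).length with
  | zero => rfl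
  | succ k => simp [chainN]

theorem chain_eq_cons {ρ q : P} (hρ : ρ ∈ (pth T ht q).support) (hne : q ≠ ρ) :
    chain T ht ρ q = q :: chain T ht ρ (parent T ht q) := by
  have hqr : q ≠ root T ht := ne_root_of_proper T ht hρ hne
  have hlen := length_pth_eq T ht hqr
  unfold chain
  rw [hlen]
  simp [chainN, hne]

theorem mem_chain_self (ρ q : P) : q ∈ chain T ht ρ q := by
  unfold chain
  cases (pth T ht q).length with
  | zero => simp [chainN]
  | succ k => by_cases h : q = ρ <;> simp [chainN, h]

theorem chain_props {ρ : P} : ∀ n {q : P}, (pth T ht q).length ≤ n → ρ ∈ (pth T ht q).support →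
    (∀ z ∈ chain T ht ρ q, z ∈ (pth T ht q).support ∧ ρ ∈ (pth T ht z).support) ∧
      ρ ∈ chain T ht ρ q := by
  intro n
  induction n with
  | zero =>
    intro q hn hρ
    have hq : q = root T ht := by
      by_contra h
      rw [length_pth_eq T ht h] at hn; omega
    subst hq
    rw [pth_root] at hρ ⊢
    simp at hρ
    subst hρ
    rw [chain_eq_self]
    constructor
    · intro z hz; simp at hz; subst hz
      rw [pth_root]; simp
    · simp
  | succ n ih =>
    intro q hn hρ
    by_cases hne : q = ρ
    · subst hne
      rw [chain_eq_self]
      refine ⟨?_, by simp⟩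
      intro z hz; simp at hz; subst hz
      exact ⟨SimpleGraph.Walk.start_mem_support _, hρ⟩
    · have hqr : q ≠ root T ht := ne_root_of_proper T ht hρ hne
      have hρp : ρ ∈ (pth T ht (parent T ht q)).support := by
        have := hρ
        rw [support_pth_eq T ht hqr] at this
        rcases List.mem_cons.1 this with h1 | h1
        · exact absurd h1.symm hne
        · exact h1
      have hlp : (pth T ht (parent T ht q)).length ≤ n := by
        have := length_pth_eq T ht hqr; omega
      obtain ⟨ih1, ih2⟩ := ih hlp hρp
      rw [chain_eq_cons T ht hρ hne]
      constructor
      · intro z hz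
        rcases List.mem_cons.1 hz with rfl | hz'
        · exact ⟨SimpleGraph.Walk.start_mem_support _, hρ⟩
        · obtain ⟨h1, h2⟩ := ih1 z hz'
          refine ⟨?_, h2⟩
          rw [support_pth_eq T ht hqr]
          exact List.mem_cons_of_mem _ h1
      · exact List.mem_cons_of_mem _ ih2

theorem chain_path {ρ : P} : ∀ n {q : P}, (pth T ht q).length ≤ n → ρ ∈ (pth T ht q).support →
    ∃ p : T.Walk q ρ, p.IsPath ∧ p.support = chain T ht ρ q := by
  intro n
  induction n with
  | zero =>
    intro q hn hρ
    have hq : q = root T ht := by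
      by_contra h
      rw [length_pth_eq T ht h] at hn; omega
    subst hq
    rw [pth_root] at hρ
    simp at hρ
    subst hρ
    exact ⟨SimpleGraph.Walk.nil, SimpleGraph.Walk.IsPath.nil, by rw [chain_eq_self]; rfl⟩
  | succ n ih =>
    intro q hn hρ
    by_cases hne : q = ρ
    · subst hne
      exact ⟨SimpleGraph.Walk.nil, SimpleGraph.Walk.IsPath.nil, by rw [chain_eq_self]; rfl⟩
    · have hqr : q ≠ root T ht := ne_root_of_proper T ht hρ hne
      have hρp : ρ ∈ (pth T ht (parent T ht q)).support := by
        have h2 := hρ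
        rw [support_pth_eq T ht hqr] at h2
        rcases List.mem_cons.1 h2 with h1 | h1
        · exact absurd h1.symm hne
        · exact h1
      have hlp : (pth T ht (parent T ht q)).length ≤ n := by
        have := length_pth_eq T ht hqr; omega
      obtain ⟨p, hp, hps⟩ := ih hlp hρp
      have hqp : q ∉ p.support := by
        rw [hps]
        intro hq
        have := ((chain_props T ht (pth T ht (parent T ht q)).length le_rfl hρp).1 q hq).1
        exact not_mem_support_parent T ht hqr this
      refine ⟨SimpleGraph.Walk.cons (adj_parent T ht hqr) p, ?_, ?_⟩
      · exact (SimpleGraph.Walk.cons_isPath_iff _ _).2 ⟨hp, hqp⟩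
      · rw [SimpleGraph.Walk.support_cons, hps, chain_eq_cons T ht hρ hne]

end Tree

section ViewTree
variable (T : SimpleGraph P) (ht : T.IsTree)
  (hconn : ∀ a : A, (SimpleGraph.induce (dom a) T).Connected)
include ht hconn

theorem doms_connected {w : List A} {i : ℕ} (h : (Doms dom w i).Nonempty) :
    (SimpleGraph.induce (Doms dom w i) T).Connected := by
  rw [doms_get dom (doms_lt dom h)]
  exact hconn _

/-- a boundary event: if an event meets both `Sub c` and its complement then it involves
both `c` and its parent -/
theorem doms_bd {w : List A} {i : ℕ} {c : P}
    (h1 : (Doms dom w i ∩ Sub T ht c).Nonempty) (h2 : (Doms dom w i ∩ (Sub T ht c)ᶜ).Nonempty) :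
    c ∈ Doms dom w i ∧ parent T ht c ∈ Doms dom w i := by
  obtain ⟨x, hx1, hx2⟩ := h1
  obtain ⟨y, hy1, hy2⟩ := h2
  exact bd T ht (doms_connected dom T ht hconn ⟨x, hx1⟩) hx1 hx2 hy1 hy2

theorem view_meet {w : List A} {c : P} {e : ℕ} {α β : P}
    (hα : α ∈ Sub T ht c) (hβ : β ∉ Sub T ht c)
    (he1 : e ∈ view dom w α) (he2 : e ∈ view dom w β) :
    e ∈ view dom w c ∧ e ∈ view dom w (parent T ht c) := by
  by_cases h1 : Doms dom w e ∩ Sub T ht c = ∅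
  · obtain ⟨k, hek, hαk⟩ := he1
    obtain ⟨m, hem, _, hm1, hm2⟩ := hb_cross dom hek h1 ⟨α, hαk, hα⟩
    obtain ⟨hcD, hpD⟩ := doms_bd dom T ht hconn hm1 hm2
    exact ⟨⟨m, hem, hcD⟩, ⟨m, hem, hpD⟩⟩
  · by_cases h2 : Doms dom w e ⊆ Sub T ht c
    · obtain ⟨k, hek, hβk⟩ := he2
      have h2' : Doms dom w e ∩ (Sub T ht c)ᶜ = ∅ := by
        ext x; simp only [Set.mem_inter_iff, Set.mem_compl_iff, Set.mem_empty_iff_false, iff_false]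
        rintro ⟨hx1, hx2⟩; exact hx2 (h2 hx1)
      obtain ⟨m, hem, _, hm1, hm2⟩ := hb_cross dom hek h2' ⟨β, hβk, hβ⟩
      rw [compl_compl] at hm2
      obtain ⟨hcD, hpD⟩ := doms_bd dom T ht hconn hm2 hm1
      exact ⟨⟨m, hem, hcD⟩, ⟨m, hem, hpD⟩⟩
    · have h2' : (Doms dom w e ∩ (Sub T ht c)ᶜ).Nonempty := by
        rw [Set.inter_compl_nonempty_iff]
        exact h2
      obtain ⟨hcD, hpD⟩ := doms_bd dom T ht hconn (Set.nonempty_iff_ne_empty.2 h1) h2'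
      exact ⟨self_mem_view dom hcD, self_mem_view dom hpD⟩

theorem view_up {w : List A} {q : P} {e : ℕ} (he : e ∈ view dom w q)
    (hd2 : ¬ Doms dom w e ⊆ Sub T ht q) : e ∈ view dom w (parent T ht q) := by
  by_cases h1 : Doms dom w e ∩ Sub T ht q = ∅
  · obtain ⟨k, hek, hqk⟩ := he
    obtain ⟨m, hem, _, hm1, hm2⟩ := hb_cross dom hek h1 ⟨q, hqk, mem_Sub_self T ht q⟩
    exact ⟨m, hem, (doms_bd dom T ht hconn hm1 hm2).2⟩
  · have h2' : (Doms dom w e ∩ (Sub T ht q)ᶜ).Nonempty := by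
      rw [Set.inter_compl_nonempty_iff]; exact hd2
    exact self_mem_view dom (doms_bd dom T ht hconn (Set.nonempty_iff_ne_empty.2 h1) h2').2

theorem view_sep {w : List A} {q q' : P} (hq' : q' ∉ Sub T ht q) {e : ℕ}
    (he : e ∈ view dom w q') (hne : e ∉ view dom w q) :
    Doms dom w e ∩ Sub T ht q = ∅ := by
  by_contra hne2
  have hne2' : (Doms dom w e ∩ Sub T ht q).Nonempty := Set.nonempty_iff_ne_empty.2 hne2
  by_cases h2 : Doms dom w e ⊆ Sub T ht q
  · obtain ⟨k, hek, hq'k⟩ := he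
    by_cases h3 : (Doms dom w k ∩ Sub T ht q) = ∅
    · have h2' : Doms dom w e ∩ (Sub T ht q)ᶜ = ∅ := by
        ext x; simp only [Set.mem_inter_iff, Set.mem_compl_iff, Set.mem_empty_iff_false, iff_false]
        rintro ⟨hx1, hx2⟩; exact hx2 (h2 hx1)
      obtain ⟨m, hem, _, hm1, hm2⟩ := hb_cross dom hek h2' ⟨q', hq'k, hq'⟩
      rw [compl_compl] at hm2
      exact hne ⟨m, hem, (doms_bd dom T ht hconn hm2 hm1).1⟩
    · have h3' : (Doms dom w k ∩ Sub T ht q).Nonempty := Set.nonempty_iff_ne_empty.2 h3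
      exact hne ⟨k, hek, (doms_bd dom T ht hconn h3' ⟨q', hq'k, hq'⟩).1⟩
  · have h2' : (Doms dom w e ∩ (Sub T ht q)ᶜ).Nonempty := by
      rw [Set.inter_compl_nonempty_iff]; exact h2
    exact hne (self_mem_view dom (doms_bd dom T ht hconn hne2' h2').1)

end ViewTree

section Merge
variable (M : PDFA A S) (T : SimpleGraph P) (ht : T.IsTree)

/-- the state of `M` after the sub-word of `w` at positions `U` -/
noncomputable def st (w : List A) (U : Set ℕ) : Option S := M.stepw M.s0 (restr U w 0)

/-- union of views of a list of processes -/
def Uof (w : List A) (l : List P) : Set ℕ := {i | ∃ q ∈ l, i ∈ view dom w q}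

/-- positions common to the views of `p` and its parent (`∅` at the root) -/
noncomputable def Kv (w : List A) (p : P) : Set ℕ :=
  if p = root T ht then ∅ else view dom w p ∩ view dom w (parent T ht p)

/-- intended local state of process `p` after `w` -/
noncomputable def sig (w : List A) (p : P) : S × S :=
  ((st M w (Kv dom T ht w p)).getD M.s0, (st M w (view dom w p)).getD M.s0)

/-- all the relevant sub-word states are defined -/
def Good (w : List A) : Prop :=
  ∀ p : P, (st M w (view dom w p)).isSome ∧ (st M w (Kv dom T ht w p)).isSome

theorem closed_Uof (w : List A) (l : List P) : Closed dom w (Uof dom w l) := by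
  refine ⟨fun i hi => ?_, fun i j hij hj hd' => ?_⟩
  · obtain ⟨q, _, hq⟩ := hi; exact view_lt dom hq
  · obtain ⟨q, hql, hq⟩ := hj
    exact ⟨q, hql, (closed_view dom w q).2 i j hij hq hd'⟩

theorem opt_ext {o₁ o₂ : Option S} (h₁ : o₁.isSome) (h₂ : o₂.isSome)
    (h : o₁.getD M.s0 = o₂.getD M.s0) : o₁ = o₂ := by
  cases o₁ with
  | none => simp at h₁
  | some a => cases o₂ with
    | none => simp at h₂
    | some b => simpa using h

/-- sequence of processes that can be merged one at a time -/
inductive MSeq (Q : Set P) (ρ : P) : List P → Prop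
  | base (h : ρ ∈ Q) : MSeq Q ρ [ρ]
  | cons (q : P) (l : List P) (hl : MSeq Q ρ l) (hq : q ∈ Q)
      (hρq : ρ ∈ (pth T ht q).support)
      (hpar : parent T ht q ∈ l) (hsub : ∀ q' ∈ l, q' ∉ Sub T ht q) : MSeq Q ρ (q :: l)

theorem mseq_rho_mem {Q : Set P} {ρ : P} {l : List P} (h : MSeq T ht Q ρ l) : ρ ∈ l := by
  induction h with
  | base _ => simp
  | cons q l _ _ _ _ _ ih => exact List.mem_cons_of_mem _ ih

theorem mseq_subset {Q : Set P} {ρ : P} {l : List P} (h : MSeq T ht Q ρ l) :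
    ∀ x ∈ l, x ∈ Q := by
  induction h with
  | base h => intro x hx; simp at hx; subst hx; exact h
  | cons q l _ hq _ _ _ ih =>
    intro x hx
    rcases List.mem_cons.1 hx with rfl | hx'
    · exact hq
    · exact ih x hx'

theorem mseq_ne_root {Q : Set P} {ρ : P} {l : List P} (h : MSeq T ht Q ρ l)
    {q : P} (hpar : parent T ht q ∈ l ∨ True) (hsub : ∀ q' ∈ l, q' ∉ Sub T ht q) :
    q ≠ root T ht := by
  intro hq
  subst hq
  exact hsub _ (mseq_rho_mem T ht h) (mem_Sub_root T ht ρ)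

theorem mseq_closed {Q : Set P} {ρ : P} {l : List P} (h : MSeq T ht Q ρ l) :
    ∀ x ∈ l, ∀ z, z ∈ (pth T ht x).support → ρ ∈ (pth T ht z).support → z ∈ l := by
  induction h with
  | base _ =>
    intro x hx z hz hρz
    simp at hx; subst hx
    have := support_antisymm T ht hz hρz
    simp [← this]
  | cons q l hl hq hρq hpar hsub ih =>
    intro x hx z hz hρz
    rcases List.mem_cons.1 hx with rfl | hx'
    · by_cases hzq : z = x
      · simp [hzq]
      · have hxr : x ≠ root T ht := mseq_ne_root T ht hl (Or.inr trivial) hsub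
        rw [support_pth_eq T ht hxr] at hz
        rcases List.mem_cons.1 hz with h1 | h1
        · exact absurd h1 hzq
        · exact List.mem_cons_of_mem _ (ih _ hpar z h1 hρz)
    · exact List.mem_cons_of_mem _ (ih x hx' z hz hρz)

theorem mseq_extend {Q : Set P} {ρ : P} : ∀ (n : ℕ) {l : List P} (_ : MSeq T ht Q ρ l)
    {q : P}, (pth T ht q).length ≤ n → ρ ∈ (pth T ht q).support →
    (∀ z ∈ chain T ht ρ q, z ∈ Q) →
    ∃ l', MSeq T ht Q ρ l' ∧ (∀ x ∈ l, x ∈ l') ∧ q ∈ l' := by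
  intro n
  induction n with
  | zero =>
    intro l hl q hn hρq hchain
    have hq : q = root T ht := by
      by_contra h
      rw [length_pth_eq T ht h] at hn; omega
    subst hq
    rw [pth_root] at hρq
    simp at hρq
    subst hρq
    exact ⟨l, hl, fun x hx => hx, mseq_rho_mem T ht hl⟩
  | succ n ih =>
    intro l hl q hn hρq hchain
    by_cases hql : q ∈ l
    · exact ⟨l, hl, fun x hx => hx, hql⟩
    by_cases hqρ : q = ρ
    · subst hqρ; exact ⟨l, hl, fun x hx => hx, mseq_rho_mem T ht hl⟩
    have hqr : q ≠ root T ht := ne_root_of_proper T ht hρq hqρ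
    have hρp : ρ ∈ (pth T ht (parent T ht q)).support := by
      have h2 := hρq
      rw [support_pth_eq T ht hqr] at h2
      rcases List.mem_cons.1 h2 with h1 | h1
      · exact absurd h1.symm hqρ
      · exact h1
    have hlp : (pth T ht (parent T ht q)).length ≤ n := by
      have := length_pth_eq T ht hqr; omega
    have hchainp : ∀ z ∈ chain T ht ρ (parent T ht q), z ∈ Q := by
      intro z hz
      exact hchain z (by rw [chain_eq_cons T ht hρq hqρ]; exact List.mem_cons_of_mem _ hz)
    obtain ⟨l', hl', hsub', hpl'⟩ := ih hl hlp hρp hchainp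
    by_cases hql' : q ∈ l'
    · exact ⟨l', hl', fun x hx => hsub' x hx, hql'⟩
    · refine ⟨q :: l', ?_, fun x hx => List.mem_cons_of_mem _ (hsub' x hx), by simp⟩
      refine MSeq.cons q l' hl' (hchain q (mem_chain_self T ht ρ q)) hρq hpl' ?_
      intro x hx hxs
      exact hql' (mseq_closed T ht hl' x hx q hxs hρq)

theorem mseq_cover {Q : Set P} {ρ : P} (hQ : ρ ∈ Q)
    (hreach : ∀ q ∈ Q, ρ ∈ (pth T ht q).support ∧ ∀ z ∈ chain T ht ρ q, z ∈ Q) :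
    ∀ t : List P, (∀ q ∈ t, q ∈ Q) → ∃ l, MSeq T ht Q ρ l ∧ ∀ q ∈ t, q ∈ l := by
  intro t
  induction t with
  | nil => exact fun _ => ⟨[ρ], MSeq.base hQ, by simp⟩
  | cons q t iht =>
    intro hts
    obtain ⟨l, hl, hcov⟩ := iht (fun x hx => hts x (List.mem_cons_of_mem _ hx))
    have hq : q ∈ Q := hts q (by simp)
    obtain ⟨l', hl', hsub', hq'⟩ := mseq_extend T ht (pth T ht q).length hl le_rfl
      (hreach q hq).1 (hreach q hq).2
    refine ⟨l', hl', ?_⟩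
    intro x hx
    rcases List.mem_cons.1 hx with rfl | hx'
    · exact hq'
    · exact hsub' x (hcov x hx')

end Merge

variable (M : PDFA A S)

theorem stepw_append (u v : List A) (s : S) :
    M.stepw s (u ++ v) = (M.stepw s u).bind fun t => M.stepw t v := by
  induction u generalizing s with
  | nil => simp [PDFA.stepw]
  | cons a u ih =>
    simp only [List.cons_append, PDFA.stepw]
    cases M.step s a with
    | none => simp
    | some t => simp [ih]

/-- letters of `x` pairwise independent from letters of `y` -/
def Indep (x y : List A) : Prop := ∀ a ∈ x, ∀ b ∈ y, dom a ∩ dom b = ∅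

variable (hd : IDiamond M fun a b => dom a ∩ dom b = ∅)
include hd

theorem comm_single (a : A) (y : List A) (h : ∀ b ∈ y, dom a ∩ dom b = ∅) (s : S) :
    M.stepw s (a :: y) = M.stepw s (y ++ [a]) := by
  induction y generalizing s with
  | nil => rfl
  | cons b y ih =>
    have hab : M.stepw s [a, b] = M.stepw s [b, a] := hd a b (h b (by simp)) s
    have h1 : M.stepw s (a :: b :: y) = (M.stepw s [a, b]).bind fun t => M.stepw t y := by
      simpa using stepw_append M [a, b] y s
    have h2 : M.stepw s (b :: a :: y) = (M.stepw s [b, a]).bind fun t => M.stepw t y := by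
      simpa using stepw_append M [b, a] y s
    have h3 : M.stepw s (a :: b :: y) = M.stepw s (b :: a :: y) := by rw [h1, h2, hab]
    rw [h3]
    show (M.step s b).bind (fun t => M.stepw t (a :: y)) = _
    rw [List.cons_append, PDFA.stepw]
    congr 1; funext t
    exact ih (fun c hc => h c (by simp [hc])) t

theorem comm (x y : List A) (h : Indep dom x y) (s : S) :
    M.stepw s (x ++ y) = M.stepw s (y ++ x) := by
  induction x generalizing s with
  | nil => simp
  | cons a x ih =>
    have ha : ∀ b ∈ y, dom a ∩ dom b = ∅ := fun b hb => h a (by simp) b hb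
    calc M.stepw s ((a :: x) ++ y) = (M.step s a).bind fun t => M.stepw t (x ++ y) := rfl
    _ = (M.step s a).bind fun t => M.stepw t (y ++ x) := by
        congr 1; funext t; exact ih (fun c hc b hb => h c (by simp [hc]) b hb) t
    _ = M.stepw s (a :: (y ++ x)) := rfl
    _ = M.stepw s ((a :: y) ++ x) := rfl
    _ = (M.stepw s (a :: y)).bind fun t => M.stepw t x := stepw_append M _ _ _
    _ = (M.stepw s (y ++ [a])).bind fun t => M.stepw t x := by rw [comm_single dom M hd a y ha]
    _ = M.stepw s ((y ++ [a]) ++ x) := (stepw_append M _ _ _).symm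
    _ = M.stepw s (y ++ (a :: x)) := by simp


include hd in
theorem rearr : ∀ (w : List A) (Z U : Set ℕ), Closed dom w Z → Closed dom w U → U ⊆ Z →
    ∀ s : S, M.stepw s (restr Z w 0) = M.stepw s (restr U w 0 ++ restr (Z \ U) w 0) := by
  intro w
  induction w using List.reverseRecOn with
  | nil => intro Z U _ _ _ s; simp [restr]
  | append_singleton w a ih =>
    intro Z U hZ hU hUZ s
    set n := w.length with hn
    by_cases hnZ : n ∈ Z
    · -- new letter is in Z
      have hZ' : Closed dom w (Z \ {n}) := by
        refine closed_of_snoc dom (a := a) ?_ (by simp [hn])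
        refine ⟨fun i hi => hZ.1 i hi.1, fun i j hij hj hd' => ⟨hZ.2 i j hij hj.1 hd', ?_⟩⟩
        simp only [Set.mem_singleton_iff]
        intro hin; subst hin
        have h1 : j < w.length + 1 := by simpa using hZ.1 j hj.1
        have h2 : j ≠ w.length := by simpa using hj.2
        omega
      by_cases hnU : n ∈ U
      · -- n in both
        have hU' : Closed dom w (U \ {n}) := by
          refine closed_of_snoc dom (a := a) ?_ (by simp [hn])
          refine ⟨fun i hi => hU.1 i hi.1, fun i j hij hj hd' => ⟨hU.2 i j hij hj.1 hd', ?_⟩⟩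
          simp only [Set.mem_singleton_iff]
          intro hin; subst hin
          have h1 : j < w.length + 1 := by simpa using hU.1 j hj.1
          have h2 : j ≠ w.length := by simpa using hj.2
          omega
        have hsub : (U \ {n}) ⊆ (Z \ {n}) := fun i hi => ⟨hUZ hi.1, hi.2⟩
        have hdiff : (Z \ {n}) \ (U \ {n}) = Z \ U := by
          ext i; simp only [Set.mem_diff, Set.mem_singleton_iff]
          constructor
          · rintro ⟨⟨h1, h2⟩, h3⟩; exact ⟨h1, fun hiU => h3 ⟨hiU, h2⟩⟩
          · rintro ⟨h1, h2⟩; exact ⟨⟨h1, fun he => h2 (he ▸ hnU)⟩, fun hh => h2 hh.1⟩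
        have key := ih (Z \ {n}) (U \ {n}) hZ' hU' hsub
        -- independence of a with letters of restr (Z \ U)
        have hindep : ∀ b ∈ restr (Z \ U) w 0, dom a ∩ dom b = ∅ := by
          intro b hb
          obtain ⟨j, hj, hjm, he⟩ := mem_restr hb
          simp only [zero_add] at hjm
          by_contra hne
          have hne' : (dom a ∩ dom b).Nonempty := Set.nonempty_iff_ne_empty.2 hne
          have : (Doms dom (w ++ [a]) j ∩ Doms dom (w ++ [a]) n).Nonempty := by
            rw [doms_append_lt dom hj, doms_snoc_last, doms_get dom hj, ← he]
            rw [Set.inter_comm]; exact hne'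
          exact hjm.2 (hU.2 j n hj hnU this)
        -- rewrite restrictions
        have e1 : restr Z (w ++ [a]) 0 = restr (Z \ {n}) w 0 ++ [a] := by
          rw [restr_snoc, if_pos hnZ]
          congr 1
          exact restr_congr w 0 (fun i _ h2 => by simp at h2 ⊢; omega)
        have e2 : restr U (w ++ [a]) 0 = restr (U \ {n}) w 0 ++ [a] := by
          rw [restr_snoc, if_pos hnU]
          congr 1
          exact restr_congr w 0 (fun i _ h2 => by simp at h2 ⊢; omega)
        have e3 : restr (Z \ U) (w ++ [a]) 0 = restr (Z \ U) w 0 := by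
          rw [restr_snoc, if_neg (fun h => h.2 hnU)]; simp
        rw [e1, e2, e3]
        calc M.stepw s (restr (Z \ {n}) w 0 ++ [a])
            = (M.stepw s (restr (Z \ {n}) w 0)).bind fun t => M.stepw t [a] := stepw_append M _ _ _
          _ = (M.stepw s (restr (U \ {n}) w 0 ++ restr (Z \ U) w 0)).bind fun t => M.stepw t [a] := by
              rw [key, hdiff]
          _ = M.stepw s ((restr (U \ {n}) w 0 ++ restr (Z \ U) w 0) ++ [a]) := (stepw_append M _ _ _).symm
          _ = (M.stepw s (restr (U \ {n}) w 0)).bind fun t => M.stepw t (restr (Z \ U) w 0 ++ [a]) := by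
              rw [List.append_assoc]; exact stepw_append M _ _ _
          _ = (M.stepw s (restr (U \ {n}) w 0)).bind fun t => M.stepw t (a :: restr (Z \ U) w 0) := by
              congr 1; funext t; exact (comm_single dom M hd a _ hindep t).symm
          _ = M.stepw s (restr (U \ {n}) w 0 ++ (a :: restr (Z \ U) w 0)) := (stepw_append M _ _ _).symm
          _ = M.stepw s ((restr (U \ {n}) w 0 ++ [a]) ++ restr (Z \ U) w 0) := by simp
      · -- n ∈ Z, n ∉ U
        have hsub : U ⊆ Z \ {n} := fun i hi => ⟨hUZ hi, by simp; rintro rfl; exact hnU hi⟩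
        have hU' : Closed dom w U := closed_of_snoc dom hU hnU
        have key := ih (Z \ {n}) U hZ' hU' hsub
        have e1 : restr Z (w ++ [a]) 0 = restr (Z \ {n}) w 0 ++ [a] := by
          rw [restr_snoc, if_pos hnZ]
          congr 1
          exact restr_congr w 0 (fun i _ h2 => by simp at h2 ⊢; omega)
        have e2 : restr U (w ++ [a]) 0 = restr U w 0 := by
          rw [restr_snoc, if_neg hnU]; simp
        have e3 : restr (Z \ U) (w ++ [a]) 0 = restr ((Z \ {n}) \ U) w 0 ++ [a] := by
          rw [restr_snoc, if_pos ⟨hnZ, hnU⟩]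
          congr 1
          exact restr_congr w 0 (fun i _ h2 => by simp at h2 ⊢; omega)
        rw [e1, e2, e3, ← List.append_assoc]
        calc M.stepw s (restr (Z \ {n}) w 0 ++ [a])
            = (M.stepw s (restr (Z \ {n}) w 0)).bind fun t => M.stepw t [a] := stepw_append M _ _ _
          _ = (M.stepw s (restr U w 0 ++ restr ((Z \ {n}) \ U) w 0)).bind fun t => M.stepw t [a] := by rw [key]
          _ = M.stepw s ((restr U w 0 ++ restr ((Z \ {n}) \ U) w 0) ++ [a]) := (stepw_append M _ _ _).symm
    · -- n ∉ Z
      have hnU : n ∉ U := fun h => hnZ (hUZ h)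
      have hZ' : Closed dom w Z := closed_of_snoc dom hZ hnZ
      have hU' : Closed dom w U := closed_of_snoc dom hU hnU
      have e1 : restr Z (w ++ [a]) 0 = restr Z w 0 := by rw [restr_snoc, if_neg hnZ]; simp
      have e2 : restr U (w ++ [a]) 0 = restr U w 0 := by rw [restr_snoc, if_neg hnU]; simp
      have e3 : restr (Z \ U) (w ++ [a]) 0 = restr (Z \ U) w 0 := by
        rw [restr_snoc, if_neg (fun h => hnZ h.1)]; simp
      rw [e1, e2, e3]
      exact ih Z U hZ' hU' hUZ s

end Stmt11

namespace Stmt11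
attribute [local instance] Classical.propDecidable
section MergeThm
variable {P A S : Type} (dom : A → Set P) (M : PDFA A S)
  (hd : IDiamond M fun a b => dom a ∩ dom b = ∅)
  (T : SimpleGraph P) (ht : T.IsTree)
  (hconn : ∀ a : A, (SimpleGraph.induce (dom a) T).Connected)

include hd in
theorem st_split {w : List A} {Z U : Set ℕ} (hZ : Closed dom w Z) (hU : Closed dom w U)
    (hUZ : U ⊆ Z) :
    st M w Z = (st M w U).bind fun s => M.stepw s (restr (Z \ U) w 0) := by
  unfold st
  rw [rearr dom M hd w Z U hZ hU hUZ, stepw_append]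

include hconn in
theorem merge_sets {q : P} {l : List P}
    (hpar : parent T ht q ∈ l) (hsub : ∀ q' ∈ l, q' ∉ Sub T ht q) (w : List A) :
    Uof dom w l ∩ view dom w q = view dom w q ∩ view dom w (parent T ht q) := by
  ext e
  constructor
  · rintro ⟨⟨q', hq'l, he'⟩, heq⟩
    exact ⟨heq, (view_meet dom T ht hconn (mem_Sub_self T ht q) (hsub q' hq'l) heq he').2⟩
  · rintro ⟨h1, h2⟩
    exact ⟨⟨parent T ht q, hpar, h2⟩, h1⟩

include hconn in
theorem merge_letters_x {q : P} {l : List P} (hpar : parent T ht q ∈ l) (w : List A) :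
    ∀ b ∈ restr (view dom w q \ Uof dom w l) w 0, dom b ⊆ Sub T ht q := by
  intro b hb
  obtain ⟨j, hj, hjm, he⟩ := mem_restr hb
  simp only [zero_add] at hjm
  by_contra hns
  have hd2 : ¬ Doms dom w j ⊆ Sub T ht q := by
    rw [doms_get dom hj, ← he]; exact hns
  have := view_up dom T ht hconn hjm.1 hd2
  exact hjm.2 ⟨parent T ht q, hpar, this⟩

include hconn in
theorem merge_letters_y {q : P} {l : List P} (hpar : parent T ht q ∈ l)
    (hsub : ∀ q' ∈ l, q' ∉ Sub T ht q) (w : List A) :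
    ∀ b ∈ restr (Uof dom w l \ view dom w q) w 0, dom b ∩ Sub T ht q = ∅ := by
  intro b hb
  obtain ⟨j, hj, hjm, he⟩ := mem_restr hb
  simp only [zero_add] at hjm
  obtain ⟨⟨q', hq'l, hq'v⟩, hnv⟩ := hjm
  have := view_sep dom T ht hconn (hsub q' hq'l) hq'v hnv
  rw [doms_get dom hj, ← he] at this
  exact this

include hd hconn in
theorem merge {Q : Set P} {ρ : P} {l : List P} (hl : MSeq T ht Q ρ l) {w w' : List A}
    (hg : Good dom M T ht w) (hg' : Good dom M T ht w')
    (hagree : ∀ q ∈ Q, sig dom M T ht w q = sig dom M T ht w' q) :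
    st M w (Uof dom w l) = st M w' (Uof dom w' l) := by
  induction hl with
  | base hρ =>
    have e : ∀ u : List A, Uof dom u [ρ] = view dom u ρ := fun u => by
      ext i; simp [Uof]
    rw [e w, e w']
    exact opt_ext M (hg ρ).1 (hg' ρ).1 (congrArg Prod.snd (hagree ρ hρ))
  | cons q l hml hq hρq hpar hsub ih =>
    have hqr : q ≠ root T ht := mseq_ne_root T ht hml (Or.inl hpar) hsub
    -- abbreviations
    set K := view dom w q ∩ view dom w (parent T ht q) with hKdef
    set K' := view dom w' q ∩ view dom w' (parent T ht q) with hK'def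
    have hKv : Kv dom T ht w q = K := by rw [Kv, if_neg hqr]
    have hKv' : Kv dom T ht w' q = K' := by rw [Kv, if_neg hqr]
    -- closedness
    have cU : Closed dom w (Uof dom w l) := closed_Uof dom w l
    have cU' : Closed dom w' (Uof dom w' l) := closed_Uof dom w' l
    have cV : Closed dom w (view dom w q) := closed_view dom w q
    have cV' : Closed dom w' (view dom w' q) := closed_view dom w' q
    have cK : Closed dom w K := closed_inter dom cV (closed_view dom w _)
    have cK' : Closed dom w' K' := closed_inter dom cV' (closed_view dom w' _)
    have cUV : Closed dom w (Uof dom w (q :: l)) := closed_Uof dom w _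
    have cUV' : Closed dom w' (Uof dom w' (q :: l)) := closed_Uof dom w' _
    -- set identities
    have hU1 : ∀ u : List A, Uof dom u (q :: l) = Uof dom u l ∪ view dom u q := fun u => by
      ext i
      simp only [Uof, Set.mem_setOf_eq, Set.mem_union, List.mem_cons]
      constructor
      · rintro ⟨q', (rfl | hq'), hv⟩
        · exact Or.inr hv
        · exact Or.inl ⟨q', hq', hv⟩
      · rintro (⟨q', hq', hv⟩ | hv)
        · exact ⟨q', Or.inr hq', hv⟩
        · exact ⟨q, Or.inl rfl, hv⟩
    have hKU : Uof dom w l ∩ view dom w q = K := merge_sets dom T ht hconn hpar hsub w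
    have hKU' : Uof dom w' l ∩ view dom w' q = K' := merge_sets dom T ht hconn hpar hsub w'
    have hKsubU : K ⊆ Uof dom w l := fun i hi => ⟨parent T ht q, hpar, hi.2⟩
    have hKsubU' : K' ⊆ Uof dom w' l := fun i hi => ⟨parent T ht q, hpar, hi.2⟩
    have hKsubV : K ⊆ view dom w q := fun i hi => hi.1
    have hKsubV' : K' ⊆ view dom w' q := fun i hi => hi.1
    -- difference identities
    have hD1 : Uof dom w (q :: l) \ Uof dom w l = view dom w q \ Uof dom w l := by
      rw [hU1 w]; ext i; simp only [Set.mem_diff, Set.mem_union]; tauto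
    have hD1' : Uof dom w' (q :: l) \ Uof dom w' l = view dom w' q \ Uof dom w' l := by
      rw [hU1 w']; ext i; simp only [Set.mem_diff, Set.mem_union]; tauto
    have hD2 : view dom w q \ K = view dom w q \ Uof dom w l := by
      ext i
      simp only [Set.mem_diff]
      constructor
      · rintro ⟨h1, h2⟩
        exact ⟨h1, fun hU => h2 (hKU ▸ ⟨hU, h1⟩)⟩
      · rintro ⟨h1, h2⟩
        exact ⟨h1, fun hK2 => h2 (hKsubU hK2)⟩
    have hD2' : view dom w' q \ K' = view dom w' q \ Uof dom w' l := by
      ext i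
      simp only [Set.mem_diff]
      constructor
      · rintro ⟨h1, h2⟩
        exact ⟨h1, fun hU => h2 (hKU' ▸ ⟨hU, h1⟩)⟩
      · rintro ⟨h1, h2⟩
        exact ⟨h1, fun hK2 => h2 (hKsubU' hK2)⟩
    have hD3 : Uof dom w l \ K = Uof dom w l \ view dom w q := by
      ext i
      simp only [Set.mem_diff]
      constructor
      · rintro ⟨h1, h2⟩
        exact ⟨h1, fun hV => h2 (hKU ▸ ⟨h1, hV⟩)⟩
      · rintro ⟨h1, h2⟩
        exact ⟨h1, fun hK2 => h2 (hKsubV hK2)⟩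
    have hD3' : Uof dom w' l \ K' = Uof dom w' l \ view dom w' q := by
      ext i
      simp only [Set.mem_diff]
      constructor
      · rintro ⟨h1, h2⟩
        exact ⟨h1, fun hV => h2 (hKU' ▸ ⟨h1, hV⟩)⟩
      · rintro ⟨h1, h2⟩
        exact ⟨h1, fun hK2 => h2 (hKsubV' hK2)⟩
    -- the words
    set x := restr (view dom w q \ Uof dom w l) w 0 with hxdef
    set y := restr (Uof dom w l \ view dom w q) w 0 with hydef
    set x' := restr (view dom w' q \ Uof dom w' l) w' 0 with hx'def
    set y' := restr (Uof dom w' l \ view dom w' q) w' 0 with hy'def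
    -- state of K agrees
    obtain ⟨k, hk⟩ : ∃ k, st M w K = some k := by
      have := (hg q).2; rw [hKv] at this
      exact Option.isSome_iff_exists.1 this
    have hkk : st M w' K' = some k := by
      rw [← hk]
      refine (opt_ext M ?_ ?_ ?_).symm
      · have := (hg q).2; rwa [hKv] at this
      · have := (hg' q).2; rwa [hKv'] at this
      · have := congrArg Prod.fst (hagree q hq)
        simpa [sig, hKv, hKv'] using this
    -- split identities
    have s1 : st M w (Uof dom w (q :: l)) = M.stepw k (y ++ x) := by
      rw [st_split dom M hd cUV cU (by rw [hU1 w]; exact Set.subset_union_left), hD1]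
      rw [st_split dom M hd cU cK hKsubU, hk, hD3]
      simp [stepw_append]; rfl
    have s1' : st M w' (Uof dom w' (q :: l)) = M.stepw k (y' ++ x') := by
      rw [st_split dom M hd cUV' cU' (by rw [hU1 w']; exact Set.subset_union_left), hD1']
      rw [st_split dom M hd cU' cK' hKsubU', hkk, hD3']
      simp [stepw_append]; rfl
    have s2 : M.stepw k y = st M w (Uof dom w l) := by
      rw [st_split dom M hd cU cK hKsubU, hk, hD3]; rfl
    have s2' : M.stepw k y' = st M w' (Uof dom w' l) := by
      rw [st_split dom M hd cU' cK' hKsubU', hkk, hD3']; rfl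
    have s3 : M.stepw k x = st M w (view dom w q) := by
      rw [st_split dom M hd cV cK hKsubV, hk, hD2]; rfl
    have s3' : M.stepw k x' = st M w' (view dom w' q) := by
      rw [st_split dom M hd cV' cK' hKsubV', hkk, hD2']; rfl
    -- cross-word equalities
    have hUeq : st M w (Uof dom w l) = st M w' (Uof dom w' l) := ih
    have hVeq : st M w (view dom w q) = st M w' (view dom w' q) :=
      opt_ext M (hg q).1 (hg' q).1 (congrArg Prod.snd (hagree q hq))
    have hyy : M.stepw k y = M.stepw k y' := by rw [s2, s2', hUeq]
    have hxx : M.stepw k x = M.stepw k x' := by rw [s3, s3', hVeq]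
    -- independence
    have hxSub : ∀ b ∈ x, dom b ⊆ Sub T ht q := merge_letters_x dom T ht hconn hpar w
    have hx'Sub : ∀ b ∈ x', dom b ⊆ Sub T ht q := merge_letters_x dom T ht hconn hpar w'
    have hySub : ∀ b ∈ y', dom b ∩ Sub T ht q = ∅ := merge_letters_y dom T ht hconn hpar hsub w'
    have hIxy' : Indep dom x y' := by
      intro a ha b hb
      have h1 := hxSub a ha
      have h2 := hySub b hb
      ext p
      simp only [Set.mem_inter_iff, Set.mem_empty_iff_false, iff_false]
      rintro ⟨hp1, hp2⟩
      have : p ∈ dom b ∩ Sub T ht q := ⟨hp2, h1 hp1⟩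
      rw [h2] at this
      exact this
    have hIx'y' : Indep dom x' y' := by
      intro a ha b hb
      have h1 := hx'Sub a ha
      have h2 := hySub b hb
      ext p
      simp only [Set.mem_inter_iff, Set.mem_empty_iff_false, iff_false]
      rintro ⟨hp1, hp2⟩
      have : p ∈ dom b ∩ Sub T ht q := ⟨hp2, h1 hp1⟩
      rw [h2] at this
      exact this
    -- final chain
    rw [s1, s1']
    calc M.stepw k (y ++ x) = (M.stepw k y).bind fun t => M.stepw t x := stepw_append M _ _ _
      _ = (M.stepw k y').bind fun t => M.stepw t x := by rw [hyy]
      _ = M.stepw k (y' ++ x) := (stepw_append M _ _ _).symm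
      _ = M.stepw k (x ++ y') := (comm dom M hd x y' hIxy' k).symm
      _ = (M.stepw k x).bind fun t => M.stepw t y' := stepw_append M _ _ _
      _ = (M.stepw k x').bind fun t => M.stepw t y' := by rw [hxx]
      _ = M.stepw k (x' ++ y') := (stepw_append M _ _ _).symm
      _ = M.stepw k (y' ++ x') := comm dom M hd x' y' hIx'y' k


theorem stepw_single (s : S) (a : A) : M.stepw s [a] = M.step s a := by
  cases h : M.step s a <;> simp [PDFA.stepw, h]

theorem restr_empty (w : List A) (k : ℕ) : restr (∅ : Set ℕ) w k = [] := by
  induction w generalizing k with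
  | nil => rfl
  | cons b t ih => simp [restr, ih]

theorem st_empty (w : List A) : st M w ∅ = some M.s0 := by
  unfold st; rw [restr_empty]; rfl

theorem st_nil (U : Set ℕ) : st M [] U = some M.s0 := rfl

theorem view_nil (q : P) : view dom ([] : List A) q = ∅ := by
  ext i
  simp only [view, Set.mem_setOf_eq, Set.mem_empty_iff_false, iff_false]
  rintro ⟨k, _, ⟨h, _⟩⟩
  simp at h

theorem st_snoc_of_lt {w : List A} {a : A} {U : Set ℕ} (hU : ∀ i ∈ U, i < w.length) :
    st M (w ++ [a]) U = st M w U := by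
  unfold st
  rw [restr_snoc, if_neg (fun h => by have := hU _ h; omega)]
  simp

/-- union of the views of the processes of `a` -/
def Ua (a : A) (w : List A) : Set ℕ := {i | ∃ q ∈ dom a, i ∈ view dom w q}

theorem Ua_lt {a : A} {w : List A} : ∀ i ∈ Ua dom a w, i < w.length := by
  rintro i ⟨q, _, hq⟩; exact view_lt dom hq

theorem closed_Ua (a : A) (w : List A) : Closed dom w (Ua dom a w) := by
  refine ⟨Ua_lt dom, fun i j hij hj hd' => ?_⟩
  obtain ⟨q, hql, hq⟩ := hj
  exact ⟨q, hql, (closed_view dom w q).2 i j hij hq hd'⟩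

theorem closed_Ua_snoc (a : A) (w : List A) :
    Closed dom (w ++ [a]) (Ua dom a w ∪ {w.length}) := by
  constructor
  · rintro i (hi | hi)
    · have := Ua_lt dom i hi; simp; omega
    · simp at hi; simp [hi]
  · rintro i j hij (hj | hj) hd'
    · have hjl : j < w.length := Ua_lt dom j hj
      have hil : i < w.length := lt_trans hij hjl
      rw [doms_append_lt dom hil, doms_append_lt dom hjl] at hd'
      exact Or.inl ((closed_Ua dom a w).2 i j hij hj hd')
    · simp only [Set.mem_singleton_iff] at hj
      subst hj
      have hil : i < w.length := hij
      rw [doms_append_lt dom hil, doms_snoc_last dom] at hd'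
      obtain ⟨q, hq1, hq2⟩ := hd'
      exact Or.inl ⟨q, hq2, self_mem_view dom hq1⟩

theorem st_new (a : A) (w : List A) :
    st M (w ++ [a]) (Ua dom a w ∪ {w.length}) = (st M w (Ua dom a w)).bind fun s => M.step s a := by
  unfold st
  rw [restr_snoc, if_pos (show w.length ∈ Ua dom a w ∪ {w.length} by simp)]
  rw [restr_congr (U := Ua dom a w ∪ {w.length}) (V := Ua dom a w) w 0
    (fun i _ h2 => by
      simp only [Set.mem_union, Set.mem_singleton_iff]
      constructor
      · rintro (h | rfl)
        · exact h
        · omega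
      · exact Or.inl)]
  rw [stepw_append]
  congr 1
  funext s
  exact stepw_single M s a

theorem view_snoc_mem' {w : List A} {a : A} {q : P} (hq : q ∈ dom a) :
    view dom (w ++ [a]) q = Ua dom a w ∪ {w.length} := view_snoc_mem dom hq

include hconn in
/-- every position of the extended word having a process in `dom a` not below `p`
keeps the parent-intersection unchanged for `p ∉ dom a` -/
theorem doms_sub_empty {a : A} {p : P} (hp : p ∉ dom a) (hpar : parent T ht p ∈ dom a)
    (hpr : p ≠ root T ht) : ∀ z ∈ dom a, z ∉ Sub T ht p := by
  intro z hz hzs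
  exact hp (bd T ht (hconn a) hz hzs hpar (parent_not_mem_Sub T ht hpr)).1

include hconn in
theorem Kv_snoc_not_mem {w : List A} {a : A} {p : P} (hp : p ∉ dom a) :
    Kv dom T ht (w ++ [a]) p = Kv dom T ht w p := by
  unfold Kv
  by_cases hpr : p = root T ht
  · rw [if_pos hpr, if_pos hpr]
  · rw [if_neg hpr, if_neg hpr, view_snoc_not_mem dom hp]
    by_cases hpar : parent T ht p ∈ dom a
    · rw [view_snoc_mem dom hpar]
      ext e
      constructor
      · rintro ⟨he1, (⟨q', hq', he2⟩ | he2)⟩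
        · refine ⟨he1, ?_⟩
          exact (view_meet dom T ht hconn (mem_Sub_self T ht p)
            (doms_sub_empty dom T ht hconn hp hpar hpr q' hq') he1 he2).2
        · simp only [Set.mem_singleton_iff] at he2
          subst he2
          exact absurd (view_lt dom he1) (by omega)
      · rintro ⟨he1, he2⟩
        exact ⟨he1, Or.inl ⟨parent T ht p, hpar, he2⟩⟩
    · rw [view_snoc_not_mem dom hpar]

include hconn in
theorem sig_local {w : List A} {a : A} {p : P} (hp : p ∉ dom a) :
    sig dom M T ht (w ++ [a]) p = sig dom M T ht w p := by
  unfold sig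
  have hKlt : ∀ i ∈ Kv dom T ht w p, i < w.length := by
    intro i hi
    unfold Kv at hi
    by_cases hpr : p = root T ht
    · rw [if_pos hpr] at hi; simp at hi
    · rw [if_neg hpr] at hi; exact view_lt dom hi.1
  rw [view_snoc_not_mem dom hp, Kv_snoc_not_mem dom T ht hconn hp]
  rw [st_snoc_of_lt M (fun i hi => view_lt dom hi), st_snoc_of_lt M hKlt]

include hconn in
theorem good_local {w : List A} {a : A} {p : P} (hp : p ∉ dom a)
    (h1 : (st M w (view dom w p)).isSome) (h2 : (st M w (Kv dom T ht w p)).isSome) :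
    (st M (w ++ [a]) (view dom (w ++ [a]) p)).isSome ∧
      (st M (w ++ [a]) (Kv dom T ht (w ++ [a]) p)).isSome := by
  have hKlt : ∀ i ∈ Kv dom T ht w p, i < w.length := by
    intro i hi
    unfold Kv at hi
    by_cases hpr : p = root T ht
    · rw [if_pos hpr] at hi; simp at hi
    · rw [if_neg hpr] at hi; exact view_lt dom hi.1
  rw [view_snoc_not_mem dom hp, Kv_snoc_not_mem dom T ht hconn hp]
  rw [st_snoc_of_lt M (fun i hi => view_lt dom hi), st_snoc_of_lt M hKlt]
  exact ⟨h1, h2⟩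

include hconn in
theorem exists_rho (a : A) (hna : (dom a).Nonempty) :
    ∃ ρ ∈ dom a, (∀ q ∈ dom a, ρ ∈ (pth T ht q).support ∧ ∀ z ∈ chain T ht ρ q, z ∈ dom a) ∧
      (ρ ≠ root T ht → parent T ht ρ ∉ dom a) := by
  have hLne : {n | ∃ q ∈ dom a, (pth T ht q).length = n}.Nonempty :=
    ⟨(pth T ht hna.choose).length, hna.choose, hna.choose_spec, rfl⟩
  obtain ⟨ρ, hρa, hρlen⟩ := Nat.sInf_mem hLne
  have hmin : ∀ z ∈ dom a, (pth T ht ρ).length ≤ (pth T ht z).length := fun z hz => by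
    rw [hρlen]; exact Nat.sInf_le ⟨z, hz, rfl⟩
  have hreach := rho_reach T ht (hconn a) hρa hmin
  refine ⟨ρ, hρa, fun q hq => ⟨hreach q hq, ?_⟩, ?_⟩
  · -- chain of q lies in dom a
    obtain ⟨cp, hcp, hcps⟩ := chain_path T ht (pth T ht q).length le_rfl (hreach q hq)
    obtain ⟨wk, hwk⟩ := walk_in_set T ht (hconn a) hq hρa
    have hpe : cp = wk.bypass :=
      path_unique T ht cp wk.bypass hcp (SimpleGraph.Walk.bypass_isPath wk)
    intro z hz
    rw [← hcps, hpe] at hz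
    exact hwk z (SimpleGraph.Walk.support_bypass_subset wk hz)
  · intro hρr hpar
    have := hmin _ hpar
    rw [length_pth_eq T ht hρr] at this
    omega

/-- a finite list of processes whose views cover `Ua` -/
noncomputable def picks (a : A) (w : List A) : List P :=
  (List.range w.length).filterMap fun i =>
    if h : ∃ q ∈ dom a, i ∈ view dom w q then some h.choose else none

theorem picks_subset (a : A) (w : List A) : ∀ q ∈ picks dom a w, q ∈ dom a := by
  intro q hq
  rw [picks, List.mem_filterMap] at hq
  obtain ⟨i, _, hi⟩ := hq
  split at hi
  · rename_i h
    rw [Option.some_inj] at hi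
    subst hi
    exact h.choose_spec.1
  · simp at hi

theorem picks_cover (a : A) (w : List A) :
    ∀ i ∈ Ua dom a w, ∃ q ∈ picks dom a w, i ∈ view dom w q := by
  intro i hi
  have hil : i < w.length := Ua_lt dom i hi
  have h : ∃ q ∈ dom a, i ∈ view dom w q := hi
  refine ⟨h.choose, ?_, h.choose_spec.2⟩
  rw [picks, List.mem_filterMap]
  exact ⟨i, by simp [hil], by rw [dif_pos h]⟩

include hd hconn in
/-- the merged state over the domain of `a` is determined by the local states -/
theorem merge_Ua (a : A) (hna : (dom a).Nonempty) {w w' : List A}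
    (hg : Good dom M T ht w) (hg' : Good dom M T ht w')
    (hagree : ∀ q ∈ dom a, sig dom M T ht w q = sig dom M T ht w' q) :
    st M w (Ua dom a w) = st M w' (Ua dom a w') := by
  obtain ⟨ρ, hρa, hreach, _⟩ := exists_rho dom T ht hconn a hna
  obtain ⟨l, hl, hcov⟩ := mseq_cover T ht hρa hreach (picks dom a w ++ picks dom a w')
    (by
      intro q hq
      rcases List.mem_append.1 hq with h | h
      · exact picks_subset dom a w q h
      · exact picks_subset dom a w' q h)
  have hUof : ∀ u : List A, (∀ q ∈ picks dom a u, q ∈ l) → Uof dom u l = Ua dom a u := by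
    intro u hcovu
    ext i
    constructor
    · rintro ⟨q, hql, hq⟩
      exact ⟨q, mseq_subset T ht hl q hql, hq⟩
    · intro hi
      obtain ⟨q, hq1, hq2⟩ := picks_cover dom a u i hi
      exact ⟨q, hcovu q hq1, hq2⟩
  rw [← hUof w (fun q hq => hcov q (List.mem_append.2 (Or.inl hq))),
      ← hUof w' (fun q hq => hcov q (List.mem_append.2 (Or.inr hq)))]
  exact merge dom M hd T ht hconn hl hg hg' hagree

theorem Kv_step_ne {a : A} {ρ : P}
    (hreach : ∀ q ∈ dom a, ρ ∈ (pth T ht q).support ∧ ∀ z ∈ chain T ht ρ q, z ∈ dom a)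
    (w : List A) {p : P} (hp : p ∈ dom a) (hne : p ≠ ρ) :
    Kv dom T ht (w ++ [a]) p = Ua dom a w ∪ {w.length} := by
  have hρp : ρ ∈ (pth T ht p).support := (hreach p hp).1
  have hpr : p ≠ root T ht := ne_root_of_proper T ht hρp hne
  have hpar : parent T ht p ∈ dom a := by
    refine (hreach p hp).2 (parent T ht p) ?_
    rw [chain_eq_cons T ht hρp hne]
    exact List.mem_cons_of_mem _ (mem_chain_self T ht ρ _)
  rw [Kv, if_neg hpr, view_snoc_mem' dom hp, view_snoc_mem' dom hpar]
  simp

include hconn in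
theorem Kv_step_rho {a : A} {ρ : P} (hρa : ρ ∈ dom a)
    (hreach : ∀ q ∈ dom a, ρ ∈ (pth T ht q).support ∧ ∀ z ∈ chain T ht ρ q, z ∈ dom a)
    (hρpar : ρ ≠ root T ht → parent T ht ρ ∉ dom a) (w : List A) :
    Kv dom T ht (w ++ [a]) ρ = Kv dom T ht w ρ := by
  by_cases hρr : ρ = root T ht
  · rw [Kv, if_pos hρr, Kv, if_pos hρr]
  · have hpar : parent T ht ρ ∉ dom a := hρpar hρr
    rw [Kv, if_neg hρr, Kv, if_neg hρr, view_snoc_mem' dom hρa, view_snoc_not_mem dom hpar]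
    ext e
    constructor
    · rintro ⟨(⟨q', hq', hv⟩ | he), hpe⟩
      · exact ⟨(view_meet dom T ht hconn (hreach q' hq').1
          (parent_not_mem_Sub T ht hρr) hv hpe).1, hpe⟩
      · simp only [Set.mem_singleton_iff] at he
        subst he
        exact absurd (view_lt dom hpe) (by omega)
    · rintro ⟨h1, h2⟩
      exact ⟨Or.inl ⟨ρ, hρa, h1⟩, h2⟩

include hd hconn in
theorem det {a : A} (hna : (dom a).Nonempty) {w w' : List A}
    (hg : Good dom M T ht w) (hg' : Good dom M T ht w')
    (hagree : ∀ q ∈ dom a, sig dom M T ht w q = sig dom M T ht w' q) :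
    ∀ p ∈ dom a, sig dom M T ht (w ++ [a]) p = sig dom M T ht (w' ++ [a]) p := by
  obtain ⟨ρ, hρa, hreach, hρpar⟩ := exists_rho dom T ht hconn a hna
  have hUeq := merge_Ua dom M hd T ht hconn a hna hg hg' hagree
  intro p hp
  have h2 : ∀ u : List A, st M (u ++ [a]) (view dom (u ++ [a]) p) =
      (st M u (Ua dom a u)).bind fun s => M.step s a := fun u => by
    rw [view_snoc_mem' dom hp, st_new dom M]
  have hsnd : st M (w ++ [a]) (view dom (w ++ [a]) p) =
      st M (w' ++ [a]) (view dom (w' ++ [a]) p) := by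
    rw [h2 w, h2 w', hUeq]
  unfold sig
  rw [hsnd]
  by_cases hne : p = ρ
  · subst hne
    rw [Kv_step_rho dom T ht hconn hρa hreach hρpar w,
        Kv_step_rho dom T ht hconn hρa hreach hρpar w']
    have hKlt : ∀ u : List A, ∀ i ∈ Kv dom T ht u p, i < u.length := by
      intro u i hi
      unfold Kv at hi
      by_cases hpr : p = root T ht
      · rw [if_pos hpr] at hi; simp at hi
      · rw [if_neg hpr] at hi; exact view_lt dom hi.1
    rw [st_snoc_of_lt M (hKlt w), st_snoc_of_lt M (hKlt w')]
    have := congrArg Prod.fst (hagree p hp)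
    simp only [sig] at this
    rw [this]
  · rw [Kv_step_ne dom T ht hreach w hp hne, Kv_step_ne dom T ht hreach w' hp hne,
        st_new dom M, st_new dom M, hUeq]

include hd hconn in
theorem good_step {a : A} (hna : (dom a).Nonempty) {w : List A} (hg : Good dom M T ht w)
    (hdef : ((st M w (Ua dom a w)).bind fun s => M.step s a).isSome) :
    Good dom M T ht (w ++ [a]) := by
  obtain ⟨ρ, hρa, hreach, hρpar⟩ := exists_rho dom T ht hconn a hna
  intro p
  by_cases hp : p ∈ dom a
  · constructor
    · rw [view_snoc_mem' dom hp, st_new dom M]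
      exact hdef
    · by_cases hne : p = ρ
      · subst hne
        rw [Kv_step_rho dom T ht hconn hρa hreach hρpar w]
        have hKlt : ∀ i ∈ Kv dom T ht w p, i < w.length := by
          intro i hi
          unfold Kv at hi
          by_cases hpr : p = root T ht
          · rw [if_pos hpr] at hi; simp at hi
          · rw [if_neg hpr] at hi; exact view_lt dom hi.1
        rw [st_snoc_of_lt M hKlt]
        exact (hg p).2
      · rw [Kv_step_ne dom T ht hreach w hp hne, st_new dom M]
        exact hdef
  · exact good_local dom M T ht hconn hp (hg p).1 (hg p).2

include hd in
theorem good_of_def {w : List A} (hdef : (M.stepw M.s0 w).isSome) : Good dom M T ht w := by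
  have hfull : st M w {i | i < w.length} = M.stepw M.s0 w := by
    unfold st
    rw [restr_full w 0 _ (fun i _ h2 => by simpa using h2)]
  have key : ∀ U : Set ℕ, Closed dom w U → (st M w U).isSome := by
    intro U hU
    have := st_split dom M hd (closed_full dom w) hU (fun i hi => hU.1 i hi)
    rw [hfull] at this
    rw [Option.isSome_iff_exists] at hdef
    obtain ⟨s, hs⟩ := hdef
    rw [hs] at this
    cases hst : st M w U with
    | none => rw [hst] at this; simp at this
    | some _ => simp
  intro p
  refine ⟨key _ (closed_view dom w p), key _ ?_⟩
  unfold Kv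
  by_cases hpr : p = root T ht
  · rw [if_pos hpr]; exact closed_empty dom w
  · rw [if_neg hpr]; exact closed_inter dom (closed_view dom w p) (closed_view dom w _)

include hd in
theorem def_step {w : List A} {a : A} (hdef : (M.stepw M.s0 (w ++ [a])).isSome) :
    ((st M w (Ua dom a w)).bind fun s => M.step s a).isSome := by
  rw [← st_new dom M]
  have hfull : st M (w ++ [a]) {i | i < (w ++ [a]).length} = M.stepw M.s0 (w ++ [a]) := by
    unfold st
    rw [restr_full _ 0 _ (fun i _ h2 => by simpa using h2)]
  have hsplit := st_split dom M hd (closed_full dom (w ++ [a])) (closed_Ua_snoc dom a w)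
    (fun i hi => by
      rcases hi with hi | hi
      · have := Ua_lt dom i hi; simp; omega
      · simp at hi; simp [hi])
  rw [hfull] at hsplit
  rw [Option.isSome_iff_exists] at hdef
  obtain ⟨s, hs⟩ := hdef
  rw [hs] at hsplit
  cases hst : st M (w ++ [a]) (Ua dom a w ∪ {w.length}) with
  | none => rw [hst] at hsplit; simp at hsplit
  | some _ => simp

noncomputable def picksAll (w : List A) : List P :=
  (List.range w.length).filterMap fun i =>
    if h : ∃ q : P, i ∈ view dom w q then some h.choose else none

theorem picksAll_cover (hne : ∀ b : A, (dom b).Nonempty) (w : List A) :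
    ∀ i < w.length, ∃ q ∈ picksAll dom w, i ∈ view dom w q := by
  intro i hi
  have h : ∃ q : P, i ∈ view dom w q := by
    obtain ⟨q, hq⟩ := hne (w.get ⟨i, hi⟩)
    exact ⟨q, self_mem_view dom (by rw [doms_get dom hi]; exact hq)⟩
  refine ⟨h.choose, ?_, h.choose_spec⟩
  rw [picksAll, List.mem_filterMap]
  exact ⟨i, by simp [hi], by rw [dif_pos h]⟩

include hd hconn in
theorem merge_full (hne : ∀ b : A, (dom b).Nonempty) {w w' : List A}
    (hg : Good dom M T ht w) (hg' : Good dom M T ht w')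
    (hagree : ∀ p : P, sig dom M T ht w p = sig dom M T ht w' p) :
    M.stepw M.s0 w = M.stepw M.s0 w' := by
  have hreach : ∀ q ∈ (Set.univ : Set P), root T ht ∈ (pth T ht q).support ∧
      ∀ z ∈ chain T ht (root T ht) q, z ∈ (Set.univ : Set P) :=
    fun q _ => ⟨root_mem_support T ht q, fun _ _ => trivial⟩
  obtain ⟨l, hl, hcov⟩ := mseq_cover T ht (Set.mem_univ (root T ht)) hreach
    (picksAll dom w ++ picksAll dom w') (fun q _ => Set.mem_univ q)
  have hUof : ∀ u : List A, (∀ q ∈ picksAll dom u, q ∈ l) →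
      Uof dom u l = {i | i < u.length} := by
    intro u hcovu
    ext i
    constructor
    · rintro ⟨q, _, hq⟩
      exact view_lt dom hq
    · intro hi
      obtain ⟨q, hq1, hq2⟩ := picksAll_cover dom hne u i hi
      exact ⟨q, hcovu q hq1, hq2⟩
  have hfull : ∀ u : List A, st M u {i | i < u.length} = M.stepw M.s0 u := fun u => by
    unfold st
    rw [restr_full u 0 _ (fun i _ h2 => by simpa using h2)]
  rw [← hfull w, ← hfull w']
  rw [← hUof w (fun q hq => hcov q (List.mem_append.2 (Or.inl hq))),
      ← hUof w' (fun q hq => hcov q (List.mem_append.2 (Or.inr hq)))]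
  exact merge dom M hd T ht hconn hl hg hg' (fun q _ => hagree q)

theorem sig_nil (p : P) : sig dom M T ht [] p = (M.s0, M.s0) := by
  unfold sig
  rw [st_nil, st_nil]
  rfl

theorem good_nil : Good dom M T ht [] := fun p => by rw [st_nil, st_nil]; exact ⟨rfl, rfl⟩

include hd hconn in
theorem step_tuple {a : A} (hna : (dom a).Nonempty) {w w' : List A}
    (hgw : Good dom M T ht w) (hgw' : Good dom M T ht w')
    (hag : ∀ q ∈ dom a, sig dom M T ht w' q = sig dom M T ht w q) :
    (fun p => if h : p ∈ dom a then sig dom M T ht (w' ++ [a]) p else sig dom M T ht w p) =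
      fun p => sig dom M T ht (w ++ [a]) p := by
  funext p
  by_cases hp : p ∈ dom a
  · rw [dif_pos hp]
    exact det dom M hd T ht hconn hna hgw' hgw hag p hp
  · rw [dif_neg hp]
    exact (sig_local dom M T ht hconn hp).symm

/-- the asynchronous transition function of the constructed automaton -/
noncomputable def Btrans (a : A) (f : (q : {x // x ∈ dom a}) → S × S) :
    Option ((q : {x // x ∈ dom a}) → S × S) :=
  if h : ∃ w : List A, Good dom M T ht w ∧ (∀ q : {x // x ∈ dom a}, f q = sig dom M T ht w q.1)
      ∧ ((st M w (Ua dom a w)).bind fun s => M.step s a).isSome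
  then some fun q => sig dom M T ht (h.choose ++ [a]) q.1
  else none

/-- accepting global states -/
def Bacc : Set (∀ _ : P, S × S) :=
  {g | ∃ w s, M.stepw M.s0 w = some s ∧ s ∈ M.F ∧ Good dom M T ht w ∧
    g = fun p => sig dom M T ht w p}

/-- the constructed asynchronous automaton -/
noncomputable def BB : AAut P A dom fun _ => S × S :=
  ⟨fun _ => (M.s0, M.s0), Btrans dom M T ht, Bacc dom M T ht⟩

theorem runw_snoc {St : P → Type} (B : AAut P A dom St) (g : ∀ p, St p) (w : List A) (a : A) :
    B.runw g (w ++ [a]) = (B.runw g w).bind fun g' => B.stepG a g' := by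
  induction w generalizing g with
  | nil =>
    show (B.stepG a g).bind _ = _
    simp [AAut.runw]
  | cons b t ih =>
    show (B.stepG b g).bind _ = ((B.stepG b g).bind _).bind _
    cases B.stepG b g with
    | none => rfl
    | some g' => simp [ih g']

include hd hconn in
theorem inv (hne : ∀ b : A, (dom b).Nonempty) : ∀ w : List A,
    (∀ g, (BB dom M T ht).runw (BB dom M T ht).init w = some g →
      Good dom M T ht w ∧ g = fun p => sig dom M T ht w p) ∧
    ((M.stepw M.s0 w).isSome →
      (BB dom M T ht).runw (BB dom M T ht).init w = some fun p => sig dom M T ht w p) := by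
  intro w
  induction w using List.reverseRecOn with
  | nil =>
    constructor
    · intro g hg
      refine ⟨good_nil dom M T ht, ?_⟩
      have : g = (BB dom M T ht).init := by
        have h : some ((BB dom M T ht).init) = some g := hg
        exact (Option.some_inj.1 h).symm
      rw [this]
      funext p
      exact (sig_nil dom M T ht p).symm
    · intro _
      exact congrArg some (funext fun p => (sig_nil dom M T ht p).symm)
  | append_singleton w a ih =>
    obtain ⟨ihb, iha⟩ := ih
    have hrun := runw_snoc dom (BB dom M T ht) (BB dom M T ht).init w a
    constructor
    · intro g hg
      rw [hrun] at hg
      obtain ⟨g₀, hg₀, hstep⟩ := Option.bind_eq_some_iff.1 hg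
      obtain ⟨hgood, rfl⟩ := ihb g₀ hg₀
      rw [AAut.stepG] at hstep
      obtain ⟨upd, hupd, hgdef⟩ := Option.map_eq_some_iff.1 hstep
      have hupd' : Btrans dom M T ht a (fun q => sig dom M T ht w q.1) = some upd := hupd
      by_cases hc : ∃ w' : List A, Good dom M T ht w' ∧
          (∀ q : {x // x ∈ dom a}, sig dom M T ht w q.1 = sig dom M T ht w' q.1) ∧
          ((st M w' (Ua dom a w')).bind fun s => M.step s a).isSome
      · rw [Btrans, dif_pos hc] at hupd'
        obtain ⟨hgw', hagree', hdef'⟩ := hc.choose_spec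
        have hag : ∀ q ∈ dom a, sig dom M T ht hc.choose q = sig dom M T ht w q :=
          fun q hq => (hagree' ⟨q, hq⟩).symm
        have hUeq : st M hc.choose (Ua dom a hc.choose) = st M w (Ua dom a w) :=
          merge_Ua dom M hd T ht hconn a (hne a) hgw' hgood hag
        have hdefw : ((st M w (Ua dom a w)).bind fun s => M.step s a).isSome := by
          rw [← hUeq]; exact hdef'
        refine ⟨good_step dom M hd T ht hconn (hne a) hgood hdefw, ?_⟩
        have hupd2 : upd = fun q => sig dom M T ht (hc.choose ++ [a]) q.1 :=
          (Option.some_inj.1 hupd').symm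
        subst hupd2
        rw [← hgdef]
        exact step_tuple dom M hd T ht hconn (hne a) hgood hgw' hag
      · rw [Btrans, dif_neg hc] at hupd'
        exact absurd hupd' (by simp)
    · intro hdef
      have hw : (M.stepw M.s0 w).isSome := by
        rw [stepw_append] at hdef
        cases h : M.stepw M.s0 w with
        | none => rw [h] at hdef; simp at hdef
        | some _ => simp
      rw [hrun, iha hw]
      have hc : ∃ w' : List A, Good dom M T ht w' ∧
          (∀ q : {x // x ∈ dom a}, sig dom M T ht w q.1 = sig dom M T ht w' q.1) ∧
          ((st M w' (Ua dom a w')).bind fun s => M.step s a).isSome :=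
        ⟨w, good_of_def dom M hd T ht hw, fun _ => rfl, def_step dom M hd hdef⟩
      obtain ⟨hgw', hagree', hdef'⟩ := hc.choose_spec
      have hag : ∀ q ∈ dom a, sig dom M T ht hc.choose q = sig dom M T ht w q :=
        fun q hq => (hagree' ⟨q, hq⟩).symm
      have hgood : Good dom M T ht w := good_of_def dom M hd T ht hw
      show ((BB dom M T ht).stepG a _) = _
      rw [AAut.stepG]
      have hbt : (BB dom M T ht).trans a
          (fun q => sig dom M T ht w q.1) = some fun q => sig dom M T ht (hc.choose ++ [a]) q.1 := by
        show Btrans dom M T ht a _ = _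
        rw [Btrans, dif_pos hc]
      rw [hbt]
      show some _ = some _
      congr 1
      exact step_tuple dom M hd T ht hconn (hne a) hgood hgw' hag

include hd hconn in
theorem accepts_iff (hne : ∀ b : A, (dom b).Nonempty) (w : List A) :
    (BB dom M T ht).Accepts w ↔ M.Accepts w := by
  constructor
  · rintro ⟨g, hgacc, hrun⟩
    obtain ⟨hgood, rfl⟩ := (inv dom M hd T ht hconn hne w).1 g hrun
    obtain ⟨w', s, hs, hsF, hgood', hgeq⟩ := hgacc
    have hag : ∀ p : P, sig dom M T ht w p = sig dom M T ht w' p := fun p =>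
      congrFun hgeq p
    have := merge_full dom M hd T ht hconn hne hgood hgood' hag
    exact ⟨s, hsF, this ▸ hs⟩
  · rintro ⟨s, hsF, hs⟩
    have hdef : (M.stepw M.s0 w).isSome := by rw [hs]; rfl
    refine ⟨fun p => sig dom M T ht w p, ?_, (inv dom M hd T ht hconn hne w).2 hdef⟩
    exact ⟨w, s, hs, hsF, good_of_def dom M hd T ht hdef, rfl⟩

end MergeThm

end Stmt11


theorem stmt11 {P A S : Type} [Fintype S]
    (dom : A → Set P) (hne : ∀ a, (dom a).Nonempty)
    (T : SimpleGraph P) (htree : TreeLike dom T)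
    (M : PDFA A S) (hd : IDiamond M (fun a b => dom a ∩ dom b = ∅)) :
    -- the asynchronous automaton B of the construction: every process has
    -- local states S × S, starts in (s₀,s₀), and B recognizes exactly L(A);
    -- in particular every process has (at most) n² states
    ∃ B : AAut P A dom (fun _ => S × S),
      B.init = (fun _ => (M.s0, M.s0)) ∧
      (∀ w : List A, B.Accepts w ↔ M.Accepts w) ∧
      ∀ _p : P, Fintype.card (S × S) = Fintype.card S ^ 2 := by
  obtain ⟨ht, hconn, -⟩ := htree
  refine ⟨Stmt11.BB dom M T ht, rfl, fun w => Stmt11.accepts_iff dom M hd T ht hconn hne w,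
    fun _ => by simp [Fintype.card_prod, sq]⟩
end
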